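/- arXiv:math/0504339 — 2 statements merged into one kernel-verified Lean document; each statement's English description precedes it below -/
import Mathlib

section
/- Lemma 5.1, pointwise part (inequality (5.1)). For every n ≥ 2 there is a constant C depending only on n with the following property: for every n×n real matrix M = (M_{ik}) (to be thought of as the derivative M_{ik} = ∂_kβ_i of a one-form β) and every vector Ñ ∈ ℝⁿ with |Ñ| ≤ 1, setting q^{kl} = δ^{kl} − Ñ^kÑ^l, one has Σ_{i,k} M_{ik}² ≤ C ( Σ_{i,k,l} q^{kl} M_{ik} M_{il} + Σ_{i,j} (M_{ij} − M_{ji})² + (Σ_i M_{ii})² ). In the paper's notation this reads |∂β|² ≤ C ( q^{kl}δ^{ij} ∂_kβ_i ∂_lβ_j + |curl β|² + |div β|² ), where curl β_{ij} = ∂_iβ_j − ∂_jβ_i and div β = ∂_iβ^i. -/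
/-!
Lemma 5.1, pointwise part (inequality (5.1)): for an n×n matrix M (thought of as
M_{ik} = ∂_k β_i) and a vector Ñ with |Ñ| ≤ 1, setting q^{kl} = δ^{kl} − Ñ^k Ñ^l one has
|∂β|² ≤ C ( q^{kl} δ^{ij} ∂_kβ_i ∂_lβ_j + |curl β|² + |div β|² ),
with C depending only on n.
-/

open scoped BigOperators
open Finset

namespace Lemma51Aux

variable {n : ℕ}

/-- The bilinear form `xᵀ Q y` with `Q = I - N Nᵀ`. -/
def qb (N x y : Fin n → ℝ) : ℝ :=
  (∑ k, x k * y k) - (∑ k, x k * N k) * (∑ k, y k * N k)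

lemma qb_nonneg {N : Fin n → ℝ} (hN : ∑ k, N k ^ 2 ≤ 1) (x : Fin n → ℝ) :
    0 ≤ qb N x x := by
  have cs := sum_mul_sq_le_sq_mul_sq univ x N
  have hx : ∑ k, x k * x k = ∑ k, x k ^ 2 := by
    exact sum_congr rfl fun i _ => (sq (x i)).symm ▸ by ring
  have hxx : (0:ℝ) ≤ ∑ k, x k ^ 2 := sum_nonneg fun i _ => sq_nonneg _
  unfold qb
  rw [hx]
  nlinarith [cs, hxx, mul_le_mul_of_nonneg_left hN hxx]

lemma qb_sub_expand (N x y : Fin n → ℝ) (a b : ℝ) :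
    qb N (fun i => a * x i - b * y i) (fun i => a * x i - b * y i)
      = a^2 * qb N x x - 2*a*b * qb N x y + b^2 * qb N y y := by
  unfold qb
  have e1 : ∑ k, (a * x k - b * y k) * (a * x k - b * y k)
      = a^2 * (∑ k, x k * x k) - 2*a*b*(∑ k, x k * y k) + b^2 * (∑ k, y k * y k) := by
    rw [Finset.mul_sum, Finset.mul_sum, Finset.mul_sum, ← Finset.sum_sub_distrib,
      ← Finset.sum_add_distrib]
    exact sum_congr rfl fun i _ => by ring
  have e2 : ∑ k, (a * x k - b * y k) * N k
      = a * (∑ k, x k * N k) - b * (∑ k, y k * N k) := by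
    rw [Finset.mul_sum, Finset.mul_sum, ← Finset.sum_sub_distrib]
    exact sum_congr rfl fun i _ => by ring
  rw [e1, e2]
  ring

lemma qb_add_expand (N x y : Fin n → ℝ) :
    qb N (fun i => x i + y i) (fun i => x i + y i)
      = qb N x x + 2 * qb N x y + qb N y y := by
  unfold qb
  have e1 : ∑ k, (x k + y k) * (x k + y k)
      = (∑ k, x k * x k) + 2*(∑ k, x k * y k) + (∑ k, y k * y k) := by
    rw [Finset.mul_sum, ← Finset.sum_add_distrib, ← Finset.sum_add_distrib]
    exact sum_congr rfl fun i _ => by ring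
  have e2 : ∑ k, (x k + y k) * N k = (∑ k, x k * N k) + (∑ k, y k * N k) := by
    rw [← Finset.sum_add_distrib]
    exact sum_congr rfl fun i _ => by ring
  rw [e1, e2]
  ring

lemma qb_two_mul_le {N : Fin n → ℝ} (hN : ∑ k, N k ^ 2 ≤ 1) (x y : Fin n → ℝ) :
    2 * qb N x y ≤ qb N x x + qb N y y := by
  have h := qb_nonneg hN (fun i => 1 * x i - 1 * y i)
  rw [qb_sub_expand] at h
  nlinarith

lemma qb_sum_expand (N c : Fin n → ℝ) (x : Fin n → Fin n → ℝ) :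
    qb N (fun i => ∑ k, c k * x k i) (fun i => ∑ k, c k * x k i)
      = ∑ k, ∑ l, (c k * c l) * qb N (x k) (x l) := by
  unfold qb
  have hL1 : (∑ i, (∑ k, c k * x k i) * (∑ k, c k * x k i))
      = ∑ k, ∑ l, (c k * c l) * ∑ i, x k i * x l i := by
    calc (∑ i, (∑ k, c k * x k i) * (∑ k, c k * x k i))
        = ∑ i, ∑ k, ∑ l, (c k * x k i) * (c l * x l i) := by
          exact sum_congr rfl fun i _ => by rw [Finset.sum_mul_sum]
      _ = ∑ k, ∑ i, ∑ l, (c k * x k i) * (c l * x l i) := Finset.sum_comm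
      _ = ∑ k, ∑ l, ∑ i, (c k * x k i) * (c l * x l i) := by
          exact sum_congr rfl fun k _ => Finset.sum_comm
      _ = ∑ k, ∑ l, (c k * c l) * ∑ i, x k i * x l i := by
          refine sum_congr rfl fun k _ => sum_congr rfl fun l _ => ?_
          rw [Finset.mul_sum]
          exact sum_congr rfl fun i _ => by ring
  have hL2 : (∑ i, (∑ k, c k * x k i) * N i)
      = ∑ k, c k * ∑ i, x k i * N i := by
    calc (∑ i, (∑ k, c k * x k i) * N i)
        = ∑ i, ∑ k, c k * x k i * N i := by
          exact sum_congr rfl fun i _ => by rw [Finset.sum_mul]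
      _ = ∑ k, ∑ i, c k * x k i * N i := Finset.sum_comm
      _ = ∑ k, c k * ∑ i, x k i * N i := by
          refine sum_congr rfl fun k _ => ?_
          rw [Finset.mul_sum]
          exact sum_congr rfl fun i _ => by ring
  rw [hL1, hL2, Finset.sum_mul_sum]
  rw [← Finset.sum_sub_distrib]
  refine sum_congr rfl fun k _ => ?_
  rw [← Finset.sum_sub_distrib]
  refine sum_congr rfl fun l _ => ?_
  ring

lemma qb_sum_le {N : Fin n → ℝ} (hN : ∑ k, N k ^ 2 ≤ 1) (x : Fin n → Fin n → ℝ) :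
    qb N (fun i => ∑ k, N k * x k i) (fun i => ∑ k, N k * x k i)
      ≤ n * ∑ k, qb N (x k) (x k) := by
  rw [qb_sum_expand]
  have hc : ∀ k, N k ^ 2 ≤ 1 := fun k =>
    le_trans (single_le_sum (fun i _ => sq_nonneg (N i)) (mem_univ k)) hN
  have step : ∀ k l, 2 * ((N k * N l) * qb N (x k) (x l))
      ≤ qb N (x k) (x k) + qb N (x l) (x l) := by
    intro k l
    have h := qb_nonneg hN (fun i => N k * x k i - N l * x l i)
    rw [qb_sub_expand] at h
    nlinarith [qb_nonneg hN (x k), qb_nonneg hN (x l), hc k, hc l]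
  have h2 : 2 * ∑ k, ∑ l, (N k * N l) * qb N (x k) (x l)
      ≤ ∑ k : Fin n, ∑ l : Fin n, (qb N (x k) (x k) + qb N (x l) (x l)) := by
    rw [Finset.mul_sum]
    refine sum_le_sum fun k _ => ?_
    rw [Finset.mul_sum]
    exact sum_le_sum fun l _ => step k l
  have h3 : ∑ k : Fin n, ∑ l : Fin n, (qb N (x k) (x k) + qb N (x l) (x l))
      = 2 * (n * ∑ k, qb N (x k) (x k)) := by
    simp [Finset.sum_add_distrib, Finset.sum_const, card_univ, nsmul_eq_mul]
    rw [← Finset.mul_sum]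
    ring
  linarith

end Lemma51Aux


set_option maxHeartbeats 1000000 in
open Lemma51Aux in
theorem lemma5_1_pointwise (n : ℕ) (hn : 2 ≤ n) :
    ∃ C : ℝ, 0 < C ∧
      ∀ (M : Matrix (Fin n) (Fin n) ℝ) (N : EuclideanSpace ℝ (Fin n)), ‖N‖ ≤ 1 →
        (∑ i, ∑ k, M i k ^ 2) ≤
          C * ((∑ k, ∑ l, ((if k = l then (1 : ℝ) else 0) - N k * N l) *
                  (∑ i, M i k * M i l))
              + (∑ i, ∑ j, (M i j - M j i) ^ 2)
              + (∑ i, M i i) ^ 2) := by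
  refine ⟨4 * n + 2, by positivity, ?_⟩
  intro M N hN
  have hN2 : ∑ k, (N k) ^ 2 ≤ 1 := by
    have h1 : ‖N‖ ^ 2 ≤ 1 := pow_le_one₀ (norm_nonneg N) hN
    rw [EuclideanSpace.norm_eq, Real.sq_sqrt (by positivity)] at h1
    simpa [Real.norm_eq_abs, sq_abs] using h1
  set Nf : Fin n → ℝ := fun k => N k with hNf
  -- basic objects
  set v : Fin n → ℝ := fun i => ∑ k, M i k * Nf k with hv
  set w : Fin n → ℝ := fun i => ∑ k, Nf k * M k i with hw
  set u : Fin n → ℝ := fun i => ∑ k, (M i k - M k i) * Nf k with hu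
  set a : ℝ := ∑ i, v i * Nf i with ha
  set Aq : ℝ := ∑ i, Lemma51Aux.qb Nf (M i) (M i) with hAq
  set B : ℝ := ∑ i, ∑ j, (M i j - M j i) ^ 2 with hB
  set D : ℝ := (∑ i, M i i) ^ 2 with hD
  have hAq_nonneg : 0 ≤ Aq := sum_nonneg fun i _ => qb_nonneg hN2 (M i)
  have hB_nonneg : 0 ≤ B := sum_nonneg fun i _ => sum_nonneg fun j _ => sq_nonneg _
  have hD_nonneg : 0 ≤ D := sq_nonneg _
  -- the tangential Dirichlet energy in the statement equals Aq
  have h_goalA : (∑ k, ∑ l, ((if k = l then (1 : ℝ) else 0) - N k * N l) *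
      (∑ i, M i k * M i l)) = Aq := by
    have e1 : (∑ k, ∑ l, ((if k = l then (1 : ℝ) else 0) - N k * N l) *
        (∑ i, M i k * M i l))
        = (∑ k, ∑ i, M i k * M i k)
          - ∑ k, ∑ l, (Nf k * Nf l) * (∑ i, M i k * M i l) := by
      rw [← Finset.sum_sub_distrib]
      refine Finset.sum_congr rfl fun k _ => ?_
      rw [← Finset.sum_sub_distrib]
      have : ∀ l, ((if k = l then (1 : ℝ) else 0) - N k * N l) * (∑ i, M i k * M i l)
          = (if k = l then (∑ i, M i k * M i l) else 0)
            - (Nf k * Nf l) * (∑ i, M i k * M i l) := by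
        intro l
        by_cases h : k = l <;> simp [h, hNf] <;> ring
      rw [Finset.sum_congr rfl fun l _ => this l, Finset.sum_sub_distrib,
        Finset.sum_ite_eq Finset.univ k (fun l => ∑ i, M i k * M i l)]
      simp
    have e2 : ∑ i, v i * v i = ∑ k, ∑ l, (Nf k * Nf l) * (∑ i, M i k * M i l) := by
      calc ∑ i, v i * v i
          = ∑ i, ∑ k, ∑ l, (M i k * Nf k) * (M i l * Nf l) := by
            refine Finset.sum_congr rfl fun i _ => ?_
            rw [hv]
            exact Finset.sum_mul_sum _ _ _ _
        _ = ∑ k, ∑ i, ∑ l, (M i k * Nf k) * (M i l * Nf l) := Finset.sum_comm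
        _ = ∑ k, ∑ l, ∑ i, (M i k * Nf k) * (M i l * Nf l) :=
            Finset.sum_congr rfl fun k _ => Finset.sum_comm
        _ = ∑ k, ∑ l, (Nf k * Nf l) * (∑ i, M i k * M i l) := by
            refine Finset.sum_congr rfl fun k _ => Finset.sum_congr rfl fun l _ => ?_
            rw [Finset.mul_sum]
            exact Finset.sum_congr rfl fun i _ => by ring
    have e3 : Aq = (∑ k, ∑ i, M i k * M i k) - ∑ i, v i * v i := by
      rw [hAq]
      simp only [Lemma51Aux.qb, hv]
      rw [Finset.sum_sub_distrib]
      congr 1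
      exact Finset.sum_comm
    rw [e1, ← e2, e3]
  -- S = Aq + V
  have hS : (∑ i, ∑ k, M i k ^ 2) = Aq + ∑ i, v i ^ 2 := by
    rw [hAq, ← Finset.sum_add_distrib]
    refine Finset.sum_congr rfl fun i _ => ?_
    simp only [Lemma51Aux.qb, hv]
    have : ∑ k, M i k * M i k = ∑ k, M i k ^ 2 :=
      Finset.sum_congr rfl fun k _ => (sq (M i k)).symm
    rw [this]
    ring
  -- V = qb v v + a²
  have hV : ∑ i, v i ^ 2 = qb Nf v v + a ^ 2 := by
    simp only [Lemma51Aux.qb, ← ha]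
    have : ∑ i, v i * v i = ∑ i, v i ^ 2 :=
      Finset.sum_congr rfl fun i _ => (sq (v i)).symm
    rw [this]
    ring
  -- v = w + u
  have hvwu : qb Nf v v ≤ 2 * qb Nf w w + 2 * qb Nf u u := by
    have hveq : v = fun i => w i + u i := by
      funext i
      rw [hv, hw, hu, ← Finset.sum_add_distrib]
      exact Finset.sum_congr rfl fun k _ => by ring
    rw [hveq, qb_add_expand]
    have := qb_two_mul_le hN2 w u
    linarith
  -- bound on the symmetric-ish part
  have hww : qb Nf w w ≤ n * Aq := by
    have := qb_sum_le hN2 (fun k => M k)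
    rw [hw]
    exact this
  -- bound on the antisymmetric part
  have huu : qb Nf u u ≤ B := by
    have h1 : ∀ i, u i * u i ≤ ∑ j, (M i j - M j i) ^ 2 := by
      intro i
      have cs := Finset.sum_mul_sq_le_sq_mul_sq Finset.univ
        (fun k => M i k - M k i) Nf
      have hnn : (0:ℝ) ≤ ∑ k, (M i k - M k i) ^ 2 :=
        Finset.sum_nonneg fun k _ => sq_nonneg _
      have : u i * u i = (∑ k, (M i k - M k i) * Nf k) ^ 2 := by rw [hu]; ring
      rw [this]
      calc (∑ k, (M i k - M k i) * Nf k) ^ 2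
          ≤ (∑ k, (M i k - M k i) ^ 2) * ∑ k, Nf k ^ 2 := cs
        _ ≤ ∑ j, (M i j - M j i) ^ 2 := by
            nlinarith [hN2, hnn]
    calc qb Nf u u ≤ ∑ i, u i * u i := by
          simp only [Lemma51Aux.qb]
          nlinarith [mul_self_nonneg (∑ i, u i * Nf i)]
      _ ≤ B := Finset.sum_le_sum fun i _ => h1 i
  -- bound on a²
  have ha2 : a ^ 2 ≤ 2 * D + 2 * n * Aq := by
    set t : ℝ := ∑ k, (M k k - v k * Nf k) with htdef
    have hta : t = (∑ i, M i i) - a := by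
      rw [htdef, ha, Finset.sum_sub_distrib]
    have ht2 : t ^ 2 ≤ n * ∑ k, (M k k - v k * Nf k) ^ 2 := by
      have h := sq_sum_le_card_mul_sum_sq
        (s := (Finset.univ : Finset (Fin n))) (f := fun k => M k k - v k * Nf k)
      rw [Finset.card_univ, Fintype.card_fin] at h
      exact h
    have hrow : ∀ k, (M k k - v k * Nf k) ^ 2 ≤ qb Nf (M k) (M k) := by
      intro k
      have h1 : (M k k - v k * Nf k) ^ 2 ≤ ∑ j, (M k j - v k * Nf j) ^ 2 :=
        Finset.single_le_sum (f := fun j => (M k j - v k * Nf j) ^ 2)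
          (fun j _ => sq_nonneg _) (Finset.mem_univ k)
      have h2 : ∑ j, (M k j - v k * Nf j) ^ 2
          = (∑ j, M k j * M k j) - 2 * v k * (∑ j, M k j * Nf j)
            + v k ^ 2 * ∑ j, Nf j ^ 2 := by
        have e : ∀ j, (M k j - v k * Nf j) ^ 2
            = (M k j * M k j - 2 * v k * (M k j * Nf j)) + v k ^ 2 * Nf j ^ 2 :=
          fun j => by ring
        rw [Finset.sum_congr rfl fun j _ => e j, Finset.sum_add_distrib,
          Finset.sum_sub_distrib, ← Finset.mul_sum, ← Finset.mul_sum]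
      have h3 : (∑ j, M k j * Nf j) = v k := by rw [hv]
      have h4 : qb Nf (M k) (M k) = (∑ j, M k j * M k j) - v k * v k := by
        simp only [Lemma51Aux.qb, h3]
      rw [h2, h3] at h1
      rw [h4]
      nlinarith [sq_nonneg (v k), hN2]
    have hsum : ∑ k, (M k k - v k * Nf k) ^ 2 ≤ Aq :=
      Finset.sum_le_sum fun k _ => hrow k
    have hn0 : (0:ℝ) ≤ (n:ℝ) := Nat.cast_nonneg n
    have haeq : a = (∑ i, M i i) - t := by linarith
    have hTD : t ^ 2 ≤ (n:ℝ) * Aq :=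
      le_trans ht2 (mul_le_mul_of_nonneg_left hsum hn0)
    clear_value t
    rw [haeq, hD]
    have expand : ((∑ i, M i i) - t) ^ 2 ≤ 2 * (∑ i, M i i) ^ 2 + 2 * t ^ 2 := by
      nlinarith [sq_nonneg ((∑ i, M i i) + t)]
    linarith
  -- combine everything
  rw [h_goalA, hS, hV]
  have hn0 : (0:ℝ) ≤ (n:ℝ) := Nat.cast_nonneg n
  have p1 : 0 ≤ (n:ℝ) * B := mul_nonneg hn0 hB_nonneg
  have p2 : 0 ≤ (n:ℝ) * D := mul_nonneg hn0 hD_nonneg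
  linarith [hvwu, hww, huu, ha2, p1, p2]
end

section
/- Lemma 11.1 (persistence of the coordinate and physical conditions). Let x : [0,T]×Ω → ℝⁿ be smooth with everywhere invertible Jacobian, and set M(t) = sup_{y∈Ω} ( |∂x/∂y(t,y)|² + |(∂x/∂y)(t,y)⁻¹|² )^{1/2}, using the Euclidean (Frobenius) matrix norm. (a) If T · |||x|||_{2,∞} · M(0) ≤ 1/8, then M(t) ≤ 2 M(0) for all 0 ≤ t ≤ T. (b) Suppose in addition that h is smooth on [0,T]×Ω with h(t,·) = 0 on ∂Ω for every t and that ∇_N h never vanishes on [0,T]×∂Ω, and set N(t) = sup_{y∈∂Ω} |∇_N h(t,y)|⁻¹. If, besides the hypothesis of (a), also T · |||h|||_{2,∞} · M(0) · N(0) ≤ 1/8, then N(t) ≤ 2 N(0) for all 0 ≤ t ≤ T. -/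
noncomputable section
open scoped BigOperators ENNReal Matrix
open Metric Set

namespace FB

/-- Euclidean space ℝⁿ. -/
abbrev Esp (n : ℕ) := EuclideanSpace ℝ (Fin n)

/-- The closed unit ball Ω. -/
def Omega (n : ℕ) : Set (Esp n) := Metric.closedBall 0 1

/-- The boundary ∂Ω, the unit sphere. -/
def Bdry (n : ℕ) : Set (Esp n) := Metric.sphere 0 1

/-- The space-time cylinder [0,T] × Ω. -/
def STc (n : ℕ) (T : ℝ) : Set (ℝ × Esp n) := Set.Icc 0 T ×ˢ Omega n

/-- Iterated directional derivatives along a list of directions. -/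
def DGen {E : Type*} [NormedAddCommGroup E] [NormedSpace ℝ E] :
    List E → (E → ℝ) → E → ℝ
  | [], u => u
  | v :: L, u => DGen L fun p => fderiv ℝ u p v

/-- Directional derivative. -/
def Dv {n : ℕ} (v : ℝ × Esp n) (u : ℝ × Esp n → ℝ) : ℝ × Esp n → ℝ :=
  fun p => fderiv ℝ u p v

/-- Time derivative D_t (at fixed Lagrangian coordinate y). -/
def Dt {n : ℕ} (u : ℝ × Esp n → ℝ) : ℝ × Esp n → ℝ := Dv ((1 : ℝ), (0 : Esp n)) u

/-- Spatial partial derivative ∂/∂yᵃ. -/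
def Dy {n : ℕ} (a : Fin n) (u : ℝ × Esp n → ℝ) : ℝ × Esp n → ℝ :=
  Dv ((0 : ℝ), EuclideanSpace.single a (1 : ℝ)) u

/-- The n+1 coordinate directions in space-time. -/
def dirST (n : ℕ) : Fin (n + 1) → ℝ × Esp n :=
  Fin.cons ((1 : ℝ), (0 : Esp n)) fun a => ((0 : ℝ), EuclideanSpace.single a (1 : ℝ))

/-- Σ_{|α| ≤ r} |∂_{t,y}^α u (p)| (sum over ordered tuples of coordinate directions). -/
def derivSum {n : ℕ} (r : ℕ) (u : ℝ × Esp n → ℝ) (p : ℝ × Esp n) : ℝ :=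
  ∑ k ∈ Finset.range (r + 1), ∑ f : Fin k → Fin (n + 1),
    |DGen (List.ofFn fun i => dirST n (f i)) u p|

/-- The norm |||u|||_{r,∞} over [0,T] × Ω. -/
def supNorm {n : ℕ} (T : ℝ) (r : ℕ) (u : ℝ × Esp n → ℝ) : ℝ :=
  sSup (derivSum r u '' STc n T)

/-- |||x|||_{r,∞} for ℝⁿ-valued functions. -/
def supNormV {n : ℕ} (T : ℝ) (r : ℕ) (x : ℝ × Esp n → Fin n → ℝ) : ℝ :=
  ∑ i, supNorm T r fun p => x p i

/-- Smooth (C^∞) scalar function on space-time. -/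
def Smooth {n : ℕ} (u : ℝ × Esp n → ℝ) : Prop := ContDiff ℝ (⊤ : ℕ∞) u

/-- Smooth ℝⁿ-valued function on space-time. -/
def SmoothV {n : ℕ} (x : ℝ × Esp n → Fin n → ℝ) : Prop :=
  ∀ i, ContDiff ℝ (⊤ : ℕ∞) fun p => x p i

/-- All time derivatives vanish at t = 0 (on Ω): membership in C^∞_{00}. -/
def Vanish00 {n : ℕ} (u : ℝ × Esp n → ℝ) : Prop :=
  ∀ k : ℕ, ∀ y ∈ Omega n, (Dt^[k] u) ((0 : ℝ), y) = 0

def Vanish00V {n : ℕ} (x : ℝ × Esp n → Fin n → ℝ) : Prop :=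
  ∀ i, Vanish00 fun p => x p i

/-- The Jacobian matrix ∂x/∂y : (∂xⁱ/∂yᵃ)_{ia}. -/
def Jac {n : ℕ} (x : ℝ × Esp n → Fin n → ℝ) (p : ℝ × Esp n) :
    Matrix (Fin n) (Fin n) ℝ :=
  Matrix.of fun i a => Dy a (fun q => x q i) p

/-- The metric g_{ab} = Σ_i (∂xⁱ/∂yᵃ)(∂xⁱ/∂yᵇ). -/
def gMat {n : ℕ} (x : ℝ × Esp n → Fin n → ℝ) (p : ℝ × Esp n) :
    Matrix (Fin n) (Fin n) ℝ :=
  (Jac x p)ᵀ * Jac x p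

/-- The inverse metric g^{ab}. -/
def gInv {n : ℕ} (x : ℝ × Esp n → Fin n → ℝ) (p : ℝ × Esp n) :
    Matrix (Fin n) (Fin n) ℝ :=
  (gMat x p)⁻¹

/-- κ = det(∂x/∂y). -/
def kap {n : ℕ} (x : ℝ × Esp n → Fin n → ℝ) (p : ℝ × Esp n) : ℝ := (Jac x p).det

/-- Eulerian partial derivative ∂_i = (∂yᵃ/∂xⁱ) ∂/∂yᵃ. -/
def pdX {n : ℕ} (x : ℝ × Esp n → Fin n → ℝ) (i : Fin n) (u : ℝ × Esp n → ℝ) :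
    ℝ × Esp n → ℝ :=
  fun p => ∑ a, (Jac x p)⁻¹ a i * Dy a u p

/-- The velocity V = D_t x. -/
def Vel {n : ℕ} (x : ℝ × Esp n → Fin n → ℝ) : ℝ × Esp n → Fin n → ℝ :=
  fun p i => Dt (fun q => x q i) p

/-- div V = ∂_i Vⁱ. -/
def divV {n : ℕ} (x : ℝ × Esp n → Fin n → ℝ) : ℝ × Esp n → ℝ :=
  fun p => ∑ i, pdX x i (fun q => Vel x q i) p

/-- Δq = κ⁻¹ ∂_a (κ g^{ab} ∂_b q). -/
def Lap {n : ℕ} (x : ℝ × Esp n → Fin n → ℝ) (q : ℝ × Esp n → ℝ) :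
    ℝ × Esp n → ℝ :=
  fun p => (kap x p)⁻¹ *
    ∑ a, Dy a (fun z => kap x z * ∑ b, gInv x z a b * Dy b q z) p

/-- The exterior normal derivative ∇_N h, with Nᵃ = g^{ab} y_b / √(g^{cd} y_c y_d). -/
def nablaN {n : ℕ} (x : ℝ × Esp n → Fin n → ℝ) (h : ℝ × Esp n → ℝ)
    (p : ℝ × Esp n) : ℝ :=
  (∑ a, (∑ b, gInv x p a b * p.2 b) * Dy a h p) /
    Real.sqrt (∑ c, ∑ d, gInv x p c d * p.2 c * p.2 d)

/-- The coordinate condition with constant c₁ at the point p. -/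
def coordCond {n : ℕ} (c₁ : ℝ) (x : ℝ × Esp n → Fin n → ℝ) (p : ℝ × Esp n) : Prop :=
  (∑ a, ∑ b, (|gMat x p a b| + |gInv x p a b|)) ≤ c₁ ^ 2 ∧
    (∑ i, ∑ a, Jac x p i a ^ 2) + (∑ a, ∑ i, ((Jac x p)⁻¹ a i) ^ 2) ≤ c₁ ^ 2

/-- The physical condition ∇_N h ≤ -c₀ on ∂Ω at time t. -/
def physCond {n : ℕ} (c₀ : ℝ) (x : ℝ × Esp n → Fin n → ℝ) (h : ℝ × Esp n → ℝ)
    (t : ℝ) : Prop :=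
  ∀ y ∈ Bdry n, nablaN x h (t, y) ≤ -c₀

/-- Θᵢ(x,h) = D_t² xᵢ + ∂_i h. -/
def EulerOp {n : ℕ} (x : ℝ × Esp n → Fin n → ℝ) (h : ℝ × Esp n → ℝ) (i : Fin n) :
    ℝ × Esp n → ℝ :=
  fun p => Dt (Dt fun q => x q i) p + pdX x i h p

/-- The source term (∂_i V^k)(∂_k V^i). -/
def WaveSrc {n : ℕ} (x : ℝ × Esp n → Fin n → ℝ) : ℝ × Esp n → ℝ :=
  fun p => ∑ i, ∑ k, pdX x i (fun q => Vel x q k) p * pdX x k (fun q => Vel x q i) p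

/-- Θ₀(x,h) = D_t² e(h) − Δh − (∂_i V^k)(∂_k V^i). -/
def WaveOp {n : ℕ} (e : ℝ → ℝ) (x : ℝ × Esp n → Fin n → ℝ) (h : ℝ × Esp n → ℝ) :
    ℝ × Esp n → ℝ :=
  fun p => Dt (Dt fun q => e (h q)) p - Lap x h p - WaveSrc x p

/-- Compatibility conditions to all orders: all time derivatives of Θ(x,h) vanish at t=0. -/
def CompatAll {n : ℕ} (e : ℝ → ℝ) (x : ℝ × Esp n → Fin n → ℝ)
    (h : ℝ × Esp n → ℝ) : Prop :=
  (∀ k : ℕ, ∀ i : Fin n, ∀ y ∈ Omega n, (Dt^[k] (EulerOp x h i)) ((0 : ℝ), y) = 0) ∧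
    ∀ k : ℕ, ∀ y ∈ Omega n, (Dt^[k] (WaveOp e x h)) ((0 : ℝ), y) = 0

/-- L²(Ω) norm of a function of the space variable. -/
def L2Omega {n : ℕ} (u : Esp n → ℝ) : ℝ := Real.sqrt (∫ y in Omega n, u y ^ 2)

/-- Σ_{|α| ≤ r} ‖∂_y^α u(t,·)‖_{L²(Ω)} : spatial derivatives only. -/
def spL2 {n : ℕ} (r : ℕ) (u : ℝ × Esp n → ℝ) (t : ℝ) : ℝ :=
  ∑ j ∈ Finset.range (r + 1), ∑ f : Fin j → Fin n,
    L2Omega fun y =>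
      DGen (List.ofFn fun i =>
        (((0 : ℝ), EuclideanSpace.single (f i) (1 : ℝ)) : ℝ × Esp n)) u (t, y)

/-- The mixed norm ‖u(t)‖_{r,s} = Σ_{|α|≤r, k≤s} ‖∂_t^k ∂_y^α u(t,·)‖_{L²(Ω)}. -/
def mixL2 {n : ℕ} (r s : ℕ) (u : ℝ × Esp n → ℝ) (t : ℝ) : ℝ :=
  ∑ k ∈ Finset.range (s + 1), spL2 r (Dt^[k] u) t

/-- The norm ‖u(t)‖_r = Σ_{|α|+k ≤ r} ‖∂_t^k ∂_y^α u(t,·)‖_{L²(Ω)}. -/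
def stL2 {n : ℕ} (r : ℕ) (u : ℝ × Esp n → ℝ) (t : ℝ) : ℝ :=
  ∑ k ∈ Finset.range (r + 1), ∑ f : Fin k → Fin (n + 1),
    L2Omega fun y => DGen (List.ofFn fun i => dirST n (f i)) u (t, y)

/-- Σ_{a,b} |||g_{ab}|||_{m,∞}. -/
def gNorm {n : ℕ} (T : ℝ) (x : ℝ × Esp n → Fin n → ℝ) (m : ℕ) : ℝ :=
  ∑ a, ∑ b, supNorm T m fun p => gMat x p a b

/-- Sums of products of norms of g over tuples (m₁,…,m_k), m_i ≥ 1, Σ m_i ≤ m,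
including the empty tuple (contributing 1). -/
def gBrP {n : ℕ} (T : ℝ) (x : ℝ × Esp n → Fin n → ℝ) : ℕ → ℝ
  | 0 => 1
  | m + 1 => 1 + ∑ j ∈ Finset.range (m + 1), gNorm T x (j + 1) * gBrP T x (m - j)

/-- The bracket [[[g]]]_{m,∞}: sum over nonempty tuples for m ≥ 1, and 1 for m = 0. -/
def gBr {n : ℕ} (T : ℝ) (x : ℝ × Esp n → Fin n → ℝ) (m : ℕ) : ℝ :=
  if m = 0 then 1 else gBrP T x m - 1

/-- Spatial directional derivative on Ω (fixed time). -/
def DyS {n : ℕ} (a : Fin n) (u : Esp n → ℝ) : Esp n → ℝ :=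
  fun y => fderiv ℝ u y (EuclideanSpace.single a (1 : ℝ))

/-- Spatial Jacobian of a map Ω → ℝⁿ. -/
def JacSp {n : ℕ} (f : Esp n → Fin n → ℝ) (y : Esp n) : Matrix (Fin n) (Fin n) ℝ :=
  Matrix.of fun i a => DyS a (fun z => f z i) y

def gMatSp {n : ℕ} (f : Esp n → Fin n → ℝ) (y : Esp n) : Matrix (Fin n) (Fin n) ℝ :=
  (JacSp f y)ᵀ * JacSp f y

def gInvSp {n : ℕ} (f : Esp n → Fin n → ℝ) (y : Esp n) : Matrix (Fin n) (Fin n) ℝ :=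
  (gMatSp f y)⁻¹

def kapSp {n : ℕ} (f : Esp n → Fin n → ℝ) (y : Esp n) : ℝ := (JacSp f y).det

/-- div W = κ⁻¹ ∂_a (κ Wᵃ) (fixed time). -/
def divSp {n : ℕ} (x : Esp n → Fin n → ℝ) (W : Esp n → Fin n → ℝ) (y : Esp n) : ℝ :=
  (kapSp x y)⁻¹ * ∑ a, DyS a (fun z => kapSp x z * W z a) y

/-- L²(Ω) norm of a vector field. -/
def L2OmegaV {n : ℕ} (u : Esp n → Fin n → ℝ) : ℝ :=
  Real.sqrt (∫ y in Omega n, ∑ a, u y a ^ 2)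

/-- The LHS of the linearized Euler equation (2.28):
D_t²δxᵢ + (∂_i∂_k h)δx^k − ∂_i(δx^k ∂_k h − δh). -/
def LinEuler {n : ℕ} (x : ℝ × Esp n → Fin n → ℝ) (h δh : ℝ × Esp n → ℝ)
    (δx : ℝ × Esp n → Fin n → ℝ) (i : Fin n) : ℝ × Esp n → ℝ :=
  fun q => Dt (Dt fun z => δx z i) q + (∑ k, pdX x i (pdX x k h) q * δx q k)
    - pdX x i (fun z => (∑ k, δx z k * pdX x k h z) - δh z) q

/-- The LHS of the linearized wave equation (2.29):
D_t²(e′(h)δh) − δx^k ∂_k D_t²e(h) − Δ(δh − δx^k∂_k h) − 2(∂_iV^k)∂_k(δV^i − δx^l∂_lV^i). -/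
def LinWave {n : ℕ} (e : ℝ → ℝ) (x : ℝ × Esp n → Fin n → ℝ) (h δh : ℝ × Esp n → ℝ)
    (δx δV : ℝ × Esp n → Fin n → ℝ) : ℝ × Esp n → ℝ :=
  fun q =>
    Dt (Dt fun z => deriv e (h z) * δh z) q
      - (∑ k, δx q k * pdX x k (fun z => Dt (Dt fun w => e (h w)) z) q)
      - Lap x (fun z => δh z - ∑ k, δx z k * pdX x k h z) q
      - 2 * ∑ i, ∑ k, pdX x i (fun z => Vel x z k) q *
          pdX x k (fun z => δV z i - ∑ l, δx z l * pdX x l (fun w => Vel x w i) z) q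

/-- M(t) = sup_{y∈Ω} (|∂x/∂y|² + |(∂x/∂y)⁻¹|²)^{1/2} (Frobenius norms). -/
def Mjac {n : ℕ} (x : ℝ × Esp n → Fin n → ℝ) (t : ℝ) : ℝ :=
  sSup ((fun y => Real.sqrt ((∑ i, ∑ a, Jac x (t, y) i a ^ 2) +
      (∑ a, ∑ i, ((Jac x (t, y))⁻¹ a i) ^ 2))) '' Omega n)

/-- N(t) = sup_{y∈∂Ω} |∇_N h(t,y)|⁻¹. -/
def Nenth {n : ℕ} (x : ℝ × Esp n → Fin n → ℝ) (h : ℝ × Esp n → ℝ) (t : ℝ) : ℝ :=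
  sSup ((fun y => |nablaN x h (t, y)|⁻¹) '' Bdry n)

/-!
Lemma 11.1 (persistence of the coordinate and physical conditions):
(a) T·|||x|||_{2,∞}·M(0) ≤ 1/8 implies M(t) ≤ 2M(0) on [0,T];
(b) if furthermore h = 0 on the boundary, ∇_N h never vanishes there, and
T·|||h|||_{2,∞}·M(0)·N(0) ≤ 1/8, then N(t) ≤ 2N(0) on [0,T].
-/

lemma smooth_Dv {n : ℕ} (v : ℝ × Esp n) {u : ℝ × Esp n → ℝ} (hu : Smooth u) :
    Smooth (Dv v u) := by
  have h1 : ContDiff ℝ ((⊤:ℕ∞) : WithTop ℕ∞) (fderiv ℝ u) :=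
    hu.fderiv_right (by exact_mod_cast le_top)
  have h2 : Smooth fun p => (ContinuousLinearMap.apply ℝ ℝ v) (fderiv ℝ u p) :=
    (ContinuousLinearMap.apply ℝ ℝ v).contDiff.comp h1
  exact h2

lemma smooth_diff {n : ℕ} {u : ℝ × Esp n → ℝ} (hu : Smooth u) : Differentiable ℝ u :=
  hu.differentiable (by simp)

lemma smooth_DGen {n : ℕ} (L : List (ℝ × Esp n)) {u : ℝ × Esp n → ℝ} (hu : Smooth u) :
    Smooth (DGen L u) := by
  induction L generalizing u with
  | nil => exact hu
  | cons v L ih => exact ih (smooth_Dv v hu)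

lemma hasDerivAt_timeSlice {n : ℕ} {u : ℝ × Esp n → ℝ} (hu : Smooth u) (y : Esp n) (t : ℝ) :
    HasDerivAt (fun s => u (s, y)) (Dt u (t, y)) t := by
  have hd : HasFDerivAt u (fderiv ℝ u (t, y)) (t, y) :=
    (smooth_diff hu (t, y)).hasFDerivAt
  have hc : HasDerivAt (fun s : ℝ => ((s, y) : ℝ × Esp n)) ((1:ℝ), (0:Esp n)) t :=
    (hasDerivAt_id t).prodMk (hasDerivAt_const t y)
  have := hd.comp_hasDerivAt t hc
  exact this

lemma cont_derivSum {n : ℕ} (r : ℕ) {u : ℝ × Esp n → ℝ} (hu : Smooth u) :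
    Continuous (derivSum r u) := by
  unfold derivSum
  refine continuous_finset_sum _ fun k _ => continuous_finset_sum _ fun f _ => ?_
  exact (smooth_DGen _ hu).continuous.abs

lemma derivSum_nonneg {n : ℕ} (r : ℕ) (u : ℝ × Esp n → ℝ) (p : ℝ × Esp n) :
    0 ≤ derivSum r u p :=
  Finset.sum_nonneg fun _ _ => Finset.sum_nonneg fun _ _ => abs_nonneg _

lemma isCompact_STc (n : ℕ) (T : ℝ) : IsCompact (STc n T) :=
  isCompact_Icc.prod (isCompact_closedBall 0 1)

lemma derivSum_le_supNorm {n : ℕ} (T : ℝ) (r : ℕ) {u : ℝ × Esp n → ℝ} (hu : Smooth u)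
    {p : ℝ × Esp n} (hp : p ∈ STc n T) : derivSum r u p ≤ supNorm T r u :=
  le_csSup ((isCompact_STc n T).bddAbove_image (cont_derivSum r hu).continuousOn)
    ⟨p, hp, rfl⟩

lemma zero_mem_Omega (n : ℕ) : (0 : Esp n) ∈ Omega n := mem_closedBall_self zero_le_one

lemma supNorm_nonneg {n : ℕ} {T : ℝ} (hT : 0 ≤ T) (r : ℕ) {u : ℝ × Esp n → ℝ}
    (hu : Smooth u) : 0 ≤ supNorm T r u :=
  le_trans (derivSum_nonneg r u (0, 0))
    (derivSum_le_supNorm T r hu ⟨⟨le_refl _, hT⟩, zero_mem_Omega n⟩)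

lemma sum_abs_le_derivSum {n r k : ℕ} (hk : k ≤ r) (g : Fin n → Fin k → Fin (n+1))
    (hg : Function.Injective g) (u : ℝ × Esp n → ℝ) (p : ℝ × Esp n) :
    ∑ a, |DGen (List.ofFn fun i => dirST n (g a i)) u p| ≤ derivSum r u p := by
  classical
  have h1 : ∑ a, |DGen (List.ofFn fun i => dirST n (g a i)) u p|
      ≤ ∑ f : Fin k → Fin (n+1), |DGen (List.ofFn fun i => dirST n (f i)) u p| := by
    rw [← Finset.sum_image (s := Finset.univ) (g := g)
      (f := fun f => |DGen (List.ofFn fun i => dirST n (f i)) u p|)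
      (fun a _ b _ hab => hg hab)]
    exact Finset.sum_le_sum_of_subset_of_nonneg (Finset.subset_univ _)
      (fun _ _ _ => abs_nonneg _)
  refine le_trans h1 ?_
  exact Finset.single_le_sum
    (f := fun k' => ∑ f : Fin k' → Fin (n+1), |DGen (List.ofFn fun i => dirST n (f i)) u p|)
    (fun _ _ => Finset.sum_nonneg fun _ _ => abs_nonneg _)
    (Finset.mem_range.mpr (Nat.lt_succ_of_le hk))

lemma DGen_two_eq {n : ℕ} (a : Fin n) (u : ℝ × Esp n → ℝ) (p : ℝ × Esp n) :
    DGen (List.ofFn fun i : Fin 2 => dirST n (![a.succ, 0] i)) u p = Dt (Dy a u) p := by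
  have hl : (List.ofFn fun i : Fin 2 => dirST n (![a.succ, 0] i))
      = [((0:ℝ), EuclideanSpace.single a 1), ((1:ℝ), (0:Esp n))] := by
    simp [List.ofFn_succ, dirST, Matrix.cons_val_zero, Matrix.cons_val_one]
  rw [hl]
  rfl

lemma sum_DtDy_le_derivSum {n : ℕ} (u : ℝ × Esp n → ℝ) (p : ℝ × Esp n) :
    ∑ a, |Dt (Dy a u) p| ≤ derivSum 2 u p := by
  have hg : Function.Injective (fun a : Fin n => (![a.succ, 0] : Fin 2 → Fin (n+1))) := by
    intro a b hab
    have := congrFun hab 0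
    simpa using Fin.succ_injective _ (by simpa using this)
  have h := sum_abs_le_derivSum (r := 2) (k := 2) le_rfl _ hg u p
  refine le_trans (le_of_eq ?_) h
  refine Finset.sum_congr rfl fun a _ => ?_
  rw [DGen_two_eq]
def vn {m : ℕ} (v : Fin m → ℝ) : ℝ := Real.sqrt (∑ k, v k ^ 2)
def fn {m : ℕ} (M : Matrix (Fin m) (Fin m) ℝ) : ℝ := Real.sqrt (∑ i, ∑ j, M i j ^ 2)

lemma vn_eq_norm {m : ℕ} (v : Fin m → ℝ) :
    vn v = ‖(WithLp.equiv 2 (Fin m → ℝ)).symm v‖ := by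
  rw [EuclideanSpace.norm_eq]
  simp [vn, Real.norm_eq_abs, sq_abs]

lemma fn_eq_norm {m : ℕ} (M : Matrix (Fin m) (Fin m) ℝ) :
    fn M = ‖(WithLp.equiv 2 (Fin m × Fin m → ℝ)).symm (fun p => M p.1 p.2)‖ := by
  rw [EuclideanSpace.norm_eq]
  simp [fn, Real.norm_eq_abs, sq_abs, Fintype.sum_prod_type]

lemma vn_nonneg {m : ℕ} (v : Fin m → ℝ) : 0 ≤ vn v := Real.sqrt_nonneg _
lemma fn_nonneg {m : ℕ} (M : Matrix (Fin m) (Fin m) ℝ) : 0 ≤ fn M := Real.sqrt_nonneg _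

lemma abs_vn_sub_vn {m : ℕ} (v w : Fin m → ℝ) : |vn v - vn w| ≤ vn (v - w) := by
  rw [vn_eq_norm, vn_eq_norm, vn_eq_norm]
  have : (WithLp.equiv 2 (Fin m → ℝ)).symm (v - w)
      = (WithLp.equiv 2 (Fin m → ℝ)).symm v - (WithLp.equiv 2 (Fin m → ℝ)).symm w := rfl
  rw [this]
  exact abs_norm_sub_norm_le _ _

lemma abs_fn_sub_fn {m : ℕ} (M N : Matrix (Fin m) (Fin m) ℝ) : |fn M - fn N| ≤ fn (M - N) := by
  rw [fn_eq_norm, fn_eq_norm, fn_eq_norm]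
  have : ((WithLp.equiv 2 (Fin m × Fin m → ℝ)).symm fun p => (M - N) p.1 p.2)
      = (WithLp.equiv 2 (Fin m × Fin m → ℝ)).symm (fun p => M p.1 p.2)
        - (WithLp.equiv 2 (Fin m × Fin m → ℝ)).symm (fun p => N p.1 p.2) := rfl
  rw [this]
  exact abs_norm_sub_norm_le _ _

lemma vn_mulVec {m : ℕ} (M : Matrix (Fin m) (Fin m) ℝ) (v : Fin m → ℝ) :
    vn (M.mulVec v) ≤ fn M * vn v := by
  have h1 : ∑ i, (M.mulVec v i) ^ 2 ≤ (∑ i, ∑ j, M i j ^ 2) * (∑ j, v j ^ 2) := by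
    rw [Finset.sum_mul]
    refine Finset.sum_le_sum fun i _ => ?_
    have := Finset.sum_mul_sq_le_sq_mul_sq Finset.univ (fun j => M i j) (fun j => v j)
    simpa [Matrix.mulVec, dotProduct] using this
  calc vn (M.mulVec v) ≤ Real.sqrt ((∑ i, ∑ j, M i j ^ 2) * (∑ j, v j ^ 2)) :=
        Real.sqrt_le_sqrt h1
    _ = fn M * vn v := Real.sqrt_mul (by positivity) _

lemma fn_mul {m : ℕ} (M N : Matrix (Fin m) (Fin m) ℝ) : fn (M * N) ≤ fn M * fn N := by
  have h1 : ∑ i, ∑ j, ((M * N) i j) ^ 2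
      ≤ (∑ i, ∑ k, M i k ^ 2) * (∑ k, ∑ j, N k j ^ 2) := by
    have : ∀ i j, ((M * N) i j) ^ 2 ≤ (∑ k, M i k ^ 2) * (∑ k, N k j ^ 2) := by
      intro i j
      rw [Matrix.mul_apply]
      exact Finset.sum_mul_sq_le_sq_mul_sq _ _ _
    calc ∑ i, ∑ j, ((M * N) i j) ^ 2
        ≤ ∑ i, ∑ j, (∑ k, M i k ^ 2) * (∑ k, N k j ^ 2) :=
          Finset.sum_le_sum fun i _ => Finset.sum_le_sum fun j _ => this i j
      _ = (∑ i, ∑ k, M i k ^ 2) * (∑ k, ∑ j, N k j ^ 2) := by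
          rw [Finset.sum_mul]
          refine Finset.sum_congr rfl fun i _ => ?_
          rw [← Finset.mul_sum, Finset.sum_comm]
  calc fn (M * N) ≤ Real.sqrt ((∑ i, ∑ k, M i k ^ 2) * (∑ k, ∑ j, N k j ^ 2)) :=
        Real.sqrt_le_sqrt h1
    _ = fn M * fn N := Real.sqrt_mul (by positivity) _

lemma fn_transpose {m : ℕ} (M : Matrix (Fin m) (Fin m) ℝ) : fn Mᵀ = fn M := by
  unfold fn
  rw [Finset.sum_comm]
  rfl

lemma fn_le_sum_abs {m : ℕ} (M : Matrix (Fin m) (Fin m) ℝ) :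
    fn M ≤ ∑ i, ∑ j, |M i j| := by
  have h : ∑ i, ∑ j, M i j ^ 2 ≤ (∑ i, ∑ j, |M i j|) ^ 2 := by
    have hb : ∀ i j, |M i j| ≤ ∑ i', ∑ j', |M i' j'| := by
      intro i j
      calc |M i j| ≤ ∑ j', |M i j'| :=
            Finset.single_le_sum (f := fun j' => |M i j'|) (fun _ _ => abs_nonneg _)
              (Finset.mem_univ j)
        _ ≤ ∑ i', ∑ j', |M i' j'| :=
            Finset.single_le_sum (f := fun i' => ∑ j', |M i' j'|)
              (fun i' _ => Finset.sum_nonneg fun _ _ => abs_nonneg _) (Finset.mem_univ i)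
    calc ∑ i, ∑ j, M i j ^ 2 = ∑ i, ∑ j, |M i j| * |M i j| := by
          simp [← abs_mul, sq]
      _ ≤ ∑ i, ∑ j, |M i j| * (∑ i', ∑ j', |M i' j'|) := by
          refine Finset.sum_le_sum fun i _ => Finset.sum_le_sum fun j _ => ?_
          exact mul_le_mul_of_nonneg_left (hb i j) (abs_nonneg _)
      _ = (∑ i, ∑ j, |M i j|) * (∑ i', ∑ j', |M i' j'|) := by
          rw [Finset.sum_mul]
          exact Finset.sum_congr rfl fun i _ => by rw [Finset.sum_mul]
      _ = (∑ i, ∑ j, |M i j|) ^ 2 := (sq _).symm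
  calc fn M ≤ Real.sqrt ((∑ i, ∑ j, |M i j|) ^ 2) := Real.sqrt_le_sqrt h
    _ = ∑ i, ∑ j, |M i j| := Real.sqrt_sq (by positivity)

lemma vn_le_fn_aux {m : ℕ} (M : Matrix (Fin m) (Fin m) ℝ) (y : Fin m → ℝ) :
    vn (Mᵀ.mulVec y) ≤ fn M * vn y := by
  calc vn (Mᵀ.mulVec y) ≤ fn Mᵀ * vn y := vn_mulVec _ _
    _ = fn M * vn y := by rw [fn_transpose]


lemma fn_neg {m : ℕ} (M : Matrix (Fin m) (Fin m) ℝ) : fn (-M) = fn M := by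
  unfold fn; simp

lemma vn_eq_one {n : ℕ} {y : Esp n} (hy : y ∈ Bdry n) : vn (fun a => y a) = 1 := by
  have hn : ‖y‖ = 1 := by simpa [Bdry, mem_sphere_iff_norm] using hy
  have := EuclideanSpace.norm_eq y
  rw [hn] at this
  unfold vn
  rw [this]
  congr 1
  exact Finset.sum_congr rfl fun a _ => by rw [Real.norm_eq_abs, sq_abs]

lemma sum_abs_sub_le_of_deriv {ι : Type*} (s : Finset ι) (f f' : ι → ℝ → ℝ)
    (hd : ∀ j ∈ s, ∀ t, HasDerivAt (f j) (f' j t) t)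
    (hc : ∀ j ∈ s, Continuous (f' j))
    {t C : ℝ} (ht : 0 ≤ t) (hC : ∀ τ ∈ Icc (0:ℝ) t, ∑ j ∈ s, |f' j τ| ≤ C) :
    ∑ j ∈ s, |f j t - f j 0| ≤ t * C := by
  have hint : ∀ j ∈ s, IntervalIntegrable (f' j) MeasureTheory.volume 0 t :=
    fun j hj => ((hc j hj).intervalIntegrable _ _)
  have h1 : ∀ j ∈ s, |f j t - f j 0| ≤ ∫ τ in (0:ℝ)..t, |f' j τ| := by
    intro j hj
    have heq := intervalIntegral.integral_eq_sub_of_hasDerivAt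
      (f := f j) (f' := f' j) (fun τ _ => hd j hj τ) (hint j hj)
    rw [← heq]
    simpa [Real.norm_eq_abs] using
      intervalIntegral.norm_integral_le_integral_norm (f := f' j)
        (μ := MeasureTheory.volume) ht
  calc ∑ j ∈ s, |f j t - f j 0| ≤ ∑ j ∈ s, ∫ τ in (0:ℝ)..t, |f' j τ| :=
        Finset.sum_le_sum h1
    _ = ∫ τ in (0:ℝ)..t, ∑ j ∈ s, |f' j τ| := by
        rw [intervalIntegral.integral_finset_sum
          (fun j hj => ((hc j hj).abs.intervalIntegrable _ _))]
    _ ≤ ∫ τ in (0:ℝ)..t, C := by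
        refine intervalIntegral.integral_mono_on ht ?_ (intervalIntegrable_const) hC
        exact (continuous_finset_sum s fun j hj => (hc j hj).abs).intervalIntegrable _ _
    _ = t * C := by simp [mul_comm]

lemma supNormV_nonneg {n : ℕ} {T : ℝ} (hT : 0 ≤ T) {x : ℝ × Esp n → Fin n → ℝ}
    (hx : SmoothV x) : 0 ≤ supNormV T 2 x :=
  Finset.sum_nonneg fun i _ => supNorm_nonneg hT 2 (hx i)

lemma fn_Jac_sub_le {n : ℕ} {T : ℝ} {x : ℝ × Esp n → Fin n → ℝ} (hx : SmoothV x)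
    {t : ℝ} (ht : t ∈ Icc (0:ℝ) T) {y : Esp n} (hy : y ∈ Omega n) :
    fn (Jac x (t, y) - Jac x (0, y)) ≤ t * supNormV T 2 x := by
  have h0t : (0:ℝ) ≤ t := ht.1
  have hC : ∀ τ ∈ Icc (0:ℝ) t,
      ∑ q : Fin n × Fin n, |Dt (Dy q.2 fun p => x p q.1) (τ, y)| ≤ supNormV T 2 x := by
    intro τ hτ
    have hmem : ((τ, y) : ℝ × Esp n) ∈ STc n T := ⟨⟨hτ.1, le_trans hτ.2 ht.2⟩, hy⟩
    rw [Fintype.sum_prod_type]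
    calc ∑ i, ∑ a, |Dt (Dy a fun p => x p i) (τ, y)|
        ≤ ∑ i, derivSum 2 (fun p => x p i) (τ, y) :=
          Finset.sum_le_sum fun i _ => sum_DtDy_le_derivSum _ _
      _ ≤ supNormV T 2 x :=
          Finset.sum_le_sum fun i _ => derivSum_le_supNorm T 2 (hx i) hmem
  have key := sum_abs_sub_le_of_deriv (ι := Fin n × Fin n) Finset.univ
      (fun q s => Jac x (s, y) q.1 q.2)
      (fun q s => Dt (Dy q.2 fun p => x p q.1) (s, y))
      (fun q _ s => hasDerivAt_timeSlice (smooth_Dv _ (hx q.1)) y s)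
      (fun q _ => (smooth_Dv _ (smooth_Dv _ (hx q.1))).continuous.comp
        (continuous_id.prodMk continuous_const))
      h0t hC
  calc fn (Jac x (t,y) - Jac x (0,y))
      ≤ ∑ i, ∑ a, |(Jac x (t,y) - Jac x (0,y)) i a| := fn_le_sum_abs _
    _ = ∑ q : Fin n × Fin n, |Jac x (t,y) q.1 q.2 - Jac x (0,y) q.1 q.2| := by
        rw [Fintype.sum_prod_type]
        exact Finset.sum_congr rfl fun i _ => Finset.sum_congr rfl fun a _ => by
          rw [Matrix.sub_apply]
    _ ≤ t * supNormV T 2 x := key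

lemma cont_Jac {n : ℕ} {x : ℝ × Esp n → Fin n → ℝ} (hx : SmoothV x) :
    Continuous fun p => Jac x p :=
  continuous_matrix fun i a => (smooth_Dv _ (hx i)).continuous

lemma contAt_inv_entry {n : ℕ} {E : Type*} [TopologicalSpace E]
    {J : E → Matrix (Fin n) (Fin n) ℝ} (hJ : Continuous J) {y₀ : E}
    (hdet : (J y₀).det ≠ 0) (a i : Fin n) :
    ContinuousAt (fun y => (J y)⁻¹ a i) y₀ := by
  have heq : (fun y => (J y)⁻¹ a i) = fun y => ((J y).det)⁻¹ * (J y).adjugate a i := by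
    funext y
    rw [Matrix.inv_def, Ring.inverse_eq_inv, Matrix.smul_apply, smul_eq_mul]
  rw [heq]
  exact ((hJ.matrix_det.continuousAt).inv₀ hdet).mul
    (((continuous_apply i).comp ((continuous_apply a).comp hJ.matrix_adjugate)).continuousAt)

lemma sqrt_sums_le_Mjac {n : ℕ} {T : ℝ} (hT : 0 ≤ T) {x : ℝ × Esp n → Fin n → ℝ}
    (hx : SmoothV x) (hjac : ∀ p ∈ STc n T, (Jac x p).det ≠ 0) {y : Esp n}
    (hy : y ∈ Omega n) :
    Real.sqrt ((∑ i, ∑ a, Jac x (0,y) i a ^ 2) + ∑ a, ∑ i, ((Jac x (0,y))⁻¹ a i)^2)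
      ≤ Mjac x 0 := by
  refine le_csSup ?_ ⟨y, hy, rfl⟩
  refine (isCompact_closedBall 0 1).bddAbove_image ?_
  have hJc : Continuous fun y : Esp n => Jac x (0, y) :=
    (cont_Jac hx).comp (continuous_const.prodMk continuous_id)
  refine ContinuousOn.sqrt ?_
  refine ContinuousOn.add ?_ ?_
  · exact (continuous_finset_sum _ fun i _ => continuous_finset_sum _ fun a _ =>
      (((continuous_apply a).comp ((continuous_apply i).comp hJc)).pow 2)).continuousOn
  · refine continuousOn_finset_sum _ fun a _ => continuousOn_finset_sum _ fun i _ => ?_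
    intro y' hy'
    have hdet : (Jac x (0, y')).det ≠ 0 := hjac (0, y') ⟨⟨le_rfl, hT⟩, hy'⟩
    exact ((contAt_inv_entry hJc hdet a i).pow 2).continuousWithinAt


private lemma arith_sq_le {a M : ℝ} (ha : 0 ≤ a) (hM : 0 ≤ M) (h : a^2 ≤ M^2) : a ≤ M := by
  nlinarith

private lemma arith_amgm {sa sb a0 b0 M : ℝ} (h1 : 1 ≤ sa * sb) (hsa : sa ≤ a0^2)
    (hsb : sb ≤ b0^2) (hpa : 0 ≤ sa) (hpb : 0 ≤ sb) (hsum : a0^2 + b0^2 ≤ M^2) :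
    2 ≤ M^2 := by
  have h2 : 1 ≤ a0^2 * b0^2 :=
    le_trans h1 (mul_le_mul hsa hsb hpb (by nlinarith))
  nlinarith [sq_nonneg (a0^2 - b0^2)]

private lemma arith_pos {M : ℝ} (h2 : 2 ≤ M^2) (hnn : 0 ≤ M) : 0 < M := by
  rcases eq_or_lt_of_le hnn with h | h
  · exfalso; rw [← h] at h2; norm_num at h2
  · exact h

private lemma arith_tk {M TK : ℝ} (h2 : 2 ≤ M^2) (hM : 0 < M) (hTK : 0 ≤ TK)
    (h8 : TK * M ≤ 1/8) : TK ≤ M / 16 := by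
  nlinarith

private lemma arith_final {a0 b0 att bt M : ℝ} (ha0 : 0 ≤ a0) (hb0 : 0 ≤ b0)
    (hatt : 0 ≤ att) (hbt : 0 ≤ bt) (hs : a0^2 + b0^2 ≤ M^2) (hM : 0 < M)
    (h1 : att ≤ a0 + M/16) (h2 : bt ≤ (8/7)*b0) : att^2 + bt^2 ≤ (2*M)^2 := by
  have ha0M : a0 ≤ M := arith_sq_le ha0 hM.le (by nlinarith)
  nlinarith [sq_nonneg b0]

lemma inv_sub_inv' {n : ℕ} {A B : Matrix (Fin n) (Fin n) ℝ}
    (hA : A.det ≠ 0) (hB : B.det ≠ 0) :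
    B⁻¹ - A⁻¹ = B⁻¹ * (A - B) * A⁻¹ := by
  rw [Matrix.mul_sub, Matrix.sub_mul, Matrix.mul_assoc,
    Matrix.mul_nonsing_inv _ (isUnit_iff_ne_zero.2 hA),
    Matrix.nonsing_inv_mul _ (isUnit_iff_ne_zero.2 hB), Matrix.mul_one, Matrix.one_mul]

set_option maxHeartbeats 2000000 in
lemma main_est {n : ℕ} (hn : 0 < n) {T : ℝ} (hT : 0 < T)
    {x : ℝ × Esp n → Fin n → ℝ} (hx : SmoothV x)
    (hjac : ∀ p ∈ STc n T, (Jac x p).det ≠ 0)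
    (hsmall : T * supNormV T 2 x * Mjac x 0 ≤ 1 / 8)
    {t : ℝ} (ht : t ∈ Icc (0:ℝ) T) {y : Esp n} (hy : y ∈ Omega n) :
    fn (Jac x (0, y) - Jac x (t, y)) * Mjac x 0 ≤ 1/8
    ∧ fn ((Jac x (t, y))⁻¹) ≤ (8/7) * fn ((Jac x (0, y))⁻¹)
    ∧ fn ((Jac x (0, y))⁻¹) ≤ Mjac x 0
    ∧ 0 < Mjac x 0
    ∧ Real.sqrt ((∑ i, ∑ a, Jac x (t,y) i a ^ 2) + ∑ a, ∑ i, ((Jac x (t,y))⁻¹ a i)^2)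
        ≤ 2 * Mjac x 0 := by
  have hK : 0 ≤ supNormV T 2 x := supNormV_nonneg hT.le hx
  set K := supNormV T 2 x with hKdef
  set M₀ := Mjac x 0 with hM₀def
  set A0 := Jac x (0, y) with hA0def
  set At := Jac x (t, y) with hAtdef
  have hdet0 : A0.det ≠ 0 := hjac _ ⟨⟨le_rfl, hT.le⟩, hy⟩
  have hdett : At.det ≠ 0 := hjac _ ⟨ht, hy⟩
  have hΔ : fn (At - A0) ≤ T * K :=
    le_trans (fn_Jac_sub_le hx ht hy) (mul_le_mul_of_nonneg_right ht.2 hK)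
  have hΔ' : fn (A0 - At) ≤ T * K := by
    rw [← neg_sub, fn_neg]; exact hΔ
  have hMy : Real.sqrt ((∑ i, ∑ a, A0 i a ^ 2) + ∑ a, ∑ i, (A0⁻¹ a i)^2) ≤ M₀ :=
    sqrt_sums_le_Mjac hT.le hx hjac hy
  set a0 := fn A0 with ha0def
  set b0 := fn A0⁻¹ with hb0def
  set att := fn At with hattdef
  set bt := fn At⁻¹ with hbtdef
  have ha0 : 0 ≤ a0 := fn_nonneg _
  have hb0 : 0 ≤ b0 := fn_nonneg _
  have hatt : 0 ≤ att := fn_nonneg _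
  have hbt : 0 ≤ bt := fn_nonneg _
  have hsA0 : a0^2 = ∑ i, ∑ a, A0 i a ^ 2 :=
    Real.sq_sqrt (Finset.sum_nonneg fun _ _ => Finset.sum_nonneg fun _ _ => sq_nonneg _)
  have hsB0 : b0^2 = ∑ a, ∑ i, (A0⁻¹ a i) ^ 2 :=
    Real.sq_sqrt (Finset.sum_nonneg fun _ _ => Finset.sum_nonneg fun _ _ => sq_nonneg _)
  have hsAt : att^2 = ∑ i, ∑ a, At i a ^ 2 :=
    Real.sq_sqrt (Finset.sum_nonneg fun _ _ => Finset.sum_nonneg fun _ _ => sq_nonneg _)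
  have hsBt : bt^2 = ∑ a, ∑ i, (At⁻¹ a i) ^ 2 :=
    Real.sq_sqrt (Finset.sum_nonneg fun _ _ => Finset.sum_nonneg fun _ _ => sq_nonneg _)
  have hsum : a0^2 + b0^2 ≤ M₀^2 := by
    have h1 : (∑ i, ∑ a, A0 i a ^ 2) + ∑ a, ∑ i, (A0⁻¹ a i)^2 ≤ M₀^2 := by
      have h2 := Real.sqrt_nonneg ((∑ i, ∑ a, A0 i a ^ 2) + ∑ a, ∑ i, (A0⁻¹ a i)^2)
      have h3 := Real.sq_sqrt (show (0:ℝ) ≤ (∑ i, ∑ a, A0 i a ^ 2) + ∑ a, ∑ i, (A0⁻¹ a i)^2 from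
        add_nonneg (Finset.sum_nonneg fun _ _ => Finset.sum_nonneg fun _ _ => sq_nonneg _)
          (Finset.sum_nonneg fun _ _ => Finset.sum_nonneg fun _ _ => sq_nonneg _))
      calc (∑ i, ∑ a, A0 i a ^ 2) + ∑ a, ∑ i, (A0⁻¹ a i)^2
          = (Real.sqrt ((∑ i, ∑ a, A0 i a ^ 2) + ∑ a, ∑ i, (A0⁻¹ a i)^2))^2 := h3.symm
        _ ≤ M₀^2 := by nlinarith [hMy, h2]
    rw [hsA0, hsB0]; exact h1
  have hM0nonneg : 0 ≤ M₀ := le_trans (Real.sqrt_nonneg _) hMy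
  -- 2 ≤ M₀ ^ 2
  have hM2 : 2 ≤ M₀^2 := by
    have hAB : A0 * A0⁻¹ = 1 := Matrix.mul_nonsing_inv _ (isUnit_iff_ne_zero.2 hdet0)
    set i0 : Fin n := ⟨0, hn⟩
    have h1 : (1:ℝ) = ∑ k, A0 i0 k * A0⁻¹ k i0 := by
      rw [← Matrix.mul_apply, hAB, Matrix.one_apply_eq]
    have hcs : (1:ℝ) ≤ (∑ k, A0 i0 k ^ 2) * (∑ k, A0⁻¹ k i0 ^ 2) := by
      have := Finset.sum_mul_sq_le_sq_mul_sq Finset.univ (fun k => A0 i0 k) (fun k => A0⁻¹ k i0)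
      calc (1:ℝ) = (∑ k, A0 i0 k * A0⁻¹ k i0)^2 := by rw [← h1]; norm_num
        _ ≤ _ := this
    have hle1 : (∑ k, A0 i0 k ^ 2) ≤ a0^2 := by
      rw [hsA0]
      exact Finset.single_le_sum (f := fun i => ∑ a, A0 i a ^ 2)
        (fun _ _ => Finset.sum_nonneg fun _ _ => sq_nonneg _) (Finset.mem_univ i0)
    have hle2 : (∑ k, A0⁻¹ k i0 ^ 2) ≤ b0^2 := by
      rw [hsB0]
      refine Finset.sum_le_sum fun a _ => ?_
      exact Finset.single_le_sum (f := fun i => A0⁻¹ a i ^ 2)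
        (fun _ _ => sq_nonneg _) (Finset.mem_univ i0)
    have hpos1 : 0 ≤ ∑ k, A0 i0 k ^ 2 := Finset.sum_nonneg fun _ _ => sq_nonneg _
    have hpos2 : 0 ≤ ∑ k, A0⁻¹ k i0 ^ 2 := Finset.sum_nonneg fun _ _ => sq_nonneg _
    exact arith_amgm hcs hle1 hle2 hpos1 hpos2 hsum
  have hM0pos : 0 < M₀ := arith_pos hM2 hM0nonneg
  have hTKM : T * K * M₀ ≤ 1/8 := hsmall
  have hTKnn : 0 ≤ T * K := mul_nonneg hT.le hK
  have hTK16 : T * K ≤ M₀ / 16 := arith_tk hM2 hM0pos hTKnn hTKM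
  have ha0M : a0 ≤ M₀ := arith_sq_le ha0 hM0nonneg (by nlinarith [hsum, sq_nonneg b0])
  have hb0M : b0 ≤ M₀ := arith_sq_le hb0 hM0nonneg (by nlinarith [hsum, sq_nonneg a0])
  have conc1 : fn (A0 - At) * M₀ ≤ 1/8 :=
    le_trans (mul_le_mul_of_nonneg_right hΔ' hM0nonneg) hTKM
  -- inverse bound
  have hident : At⁻¹ - A0⁻¹ = At⁻¹ * (A0 - At) * A0⁻¹ := inv_sub_inv' hdet0 hdett
  have htri : |bt - b0| ≤ fn (At⁻¹ - A0⁻¹) := abs_fn_sub_fn _ _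
  have hmul : fn (At⁻¹ - A0⁻¹) ≤ bt * (fn (A0 - At) * b0) := by
    rw [hident]
    calc fn (At⁻¹ * (A0 - At) * A0⁻¹) ≤ fn (At⁻¹ * (A0 - At)) * b0 := fn_mul _ _
      _ ≤ (bt * fn (A0 - At)) * b0 :=
          mul_le_mul_of_nonneg_right (fn_mul _ _) hb0
      _ = bt * (fn (A0 - At) * b0) := by ring
  have hΔb0 : fn (A0 - At) * b0 ≤ 1/8 := by
    have h8 : fn (A0 - At) * b0 ≤ fn (A0 - At) * M₀ :=
      mul_le_mul_of_nonneg_left hb0M (fn_nonneg _)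
    linarith
  have conc2 : bt ≤ (8/7) * b0 := by
    have h1 : bt - b0 ≤ bt * (1/8) := by
      have := le_trans htri hmul
      have h2 : bt * (fn (A0 - At) * b0) ≤ bt * (1/8) :=
        mul_le_mul_of_nonneg_left hΔb0 hbt
      have h3 : bt - b0 ≤ |bt - b0| := le_abs_self _
      linarith
    linarith
  have hattb : att ≤ a0 + M₀/16 := by
    have htri2 : |att - a0| ≤ fn (At - A0) := abs_fn_sub_fn _ _
    have h3 : att - a0 ≤ |att - a0| := le_abs_self _
    linarith
  have conc3 : Real.sqrt ((∑ i, ∑ a, At i a ^ 2) + ∑ a, ∑ i, (At⁻¹ a i)^2)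
      ≤ 2 * M₀ := by
    have hsq : (∑ i, ∑ a, At i a ^ 2) + ∑ a, ∑ i, (At⁻¹ a i)^2 ≤ (2*M₀)^2 := by
      rw [← hsAt, ← hsBt]
      exact arith_final ha0 hb0 hatt hbt hsum hM0pos hattb conc2
    calc Real.sqrt ((∑ i, ∑ a, At i a ^ 2) + ∑ a, ∑ i, (At⁻¹ a i)^2)
        ≤ Real.sqrt ((2*M₀)^2) := Real.sqrt_le_sqrt hsq
      _ = 2*M₀ := Real.sqrt_sq (by positivity)
  exact ⟨conc1, conc2, hb0M, hM0pos, conc3⟩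

lemma tangential_deriv_zero {n : ℕ} {h : ℝ × Esp n → ℝ} (hh : Smooth h) {T : ℝ}
    (hbd : ∀ t ∈ Icc (0:ℝ) T, ∀ y ∈ Bdry n, h (t, y) = 0)
    {t : ℝ} (ht : t ∈ Icc (0:ℝ) T) {y : Esp n} (hy : y ∈ Bdry n)
    {w : Esp n} (hw : inner ℝ w y = 0) : fderiv ℝ h (t, y) (0, w) = 0 := by
  rcases eq_or_ne w 0 with rfl | hw0
  · have h0 : ((0:ℝ), (0:Esp n)) = (0 : ℝ × Esp n) := rfl
    rw [h0, map_zero]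
  · have hyn : ‖y‖ = 1 := mem_sphere_zero_iff_norm.mp hy
    have hnw : ‖w‖ ≠ 0 := norm_ne_zero_iff.mpr hw0
    set w0 : Esp n := ‖w‖⁻¹ • w with hw0def
    have hw0n : ‖w0‖ = 1 := by
      rw [hw0def, norm_smul, norm_inv, norm_norm, inv_mul_cancel₀ hnw]
    have hyw0 : inner ℝ y w0 = 0 := by
      rw [hw0def, real_inner_smul_right, real_inner_comm, hw, mul_zero]
    set c : ℝ → Esp n := fun s => Real.cos s • y + Real.sin s • w0 with hcdef
    have hcs : ∀ s, c s ∈ Bdry n := by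
      intro s
      have hsq : ‖c s‖^2 = 1 := by
        rw [hcdef]
        simp only []
        rw [norm_add_sq_real, real_inner_smul_left, real_inner_smul_right, hyw0,
          norm_smul, norm_smul, hyn, hw0n]
        simp only [Real.norm_eq_abs, mul_pow, sq_abs, mul_one, one_pow]
        nlinarith [Real.sin_sq_add_cos_sq s]
      have hcn : ‖c s‖ = 1 := by
        have := Real.sqrt_sq (norm_nonneg (c s))
        rw [hsq] at this
        rw [← this, Real.sqrt_one]
      exact mem_sphere_zero_iff_norm.mpr hcn
    have hc0 : c 0 = y := by
      rw [hcdef]; simp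
    have hcd : HasDerivAt c w0 0 := by
      have h1 : HasDerivAt (fun s => Real.cos s • y) ((-Real.sin 0) • y) 0 :=
        (Real.hasDerivAt_cos 0).smul_const y
      have h2 : HasDerivAt (fun s => Real.sin s • w0) ((Real.cos 0) • w0) 0 :=
        (Real.hasDerivAt_sin 0).smul_const w0
      have := h1.add h2
      simp at this
      exact this
    have hhd : HasDerivAt (fun s => h (t, c s)) (fderiv ℝ h (t, y) (0, w0)) 0 := by
      have hF : HasFDerivAt h (fderiv ℝ h (t, y)) (t, c 0) := by
        rw [hc0]; exact (smooth_diff hh _).hasFDerivAt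
      have hprod : HasDerivAt (fun s => ((t, c s) : ℝ × Esp n)) ((0:ℝ), w0) 0 :=
        (hasDerivAt_const 0 t).prodMk hcd
      have := hF.comp_hasDerivAt 0 hprod
      exact this
    have hconst : HasDerivAt (fun s => h (t, c s)) 0 0 := by
      have hz : (fun s => h (t, c s)) = fun _ => (0:ℝ) :=
        funext fun s => hbd t ht _ (hcs s)
      rw [hz]
      exact hasDerivAt_const 0 0
    have key : fderiv ℝ h (t, y) (0, w0) = 0 := hhd.unique hconst
    have hsm : ((0:ℝ), w) = ‖w‖ • (((0:ℝ), w0) : ℝ × Esp n) := by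
      rw [Prod.smul_mk, smul_zero, hw0def, smul_inv_smul₀ hnw]
    rw [hsm, map_smul, key, smul_zero]

lemma Dy_radial {n : ℕ} {h : ℝ × Esp n → ℝ} (hh : Smooth h) {T : ℝ}
    (hbd : ∀ t ∈ Icc (0:ℝ) T, ∀ y ∈ Bdry n, h (t, y) = 0)
    {t : ℝ} (ht : t ∈ Icc (0:ℝ) T) {y : Esp n} (hy : y ∈ Bdry n) (a : Fin n) :
    Dy a h (t, y) = y a * fderiv ℝ h (t, y) (0, y) := by
  have hyn : ‖y‖ = 1 := mem_sphere_zero_iff_norm.mp hy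
  set u : Esp n := EuclideanSpace.single a (1:ℝ) - (y a) • y with hudef
  have hu : inner ℝ u y = 0 := by
    rw [hudef, inner_sub_left, real_inner_smul_left, real_inner_self_eq_norm_sq, hyn,
      EuclideanSpace.inner_single_left]
    simp
  have hsplit : ((0:ℝ), EuclideanSpace.single a (1:ℝ)) =
      (y a) • (((0:ℝ), y) : ℝ × Esp n) + (((0:ℝ), u) : ℝ × Esp n) := by
    rw [Prod.smul_mk, smul_zero, Prod.mk_add_mk, add_zero, hudef]
    rw [add_sub_cancel]
  show fderiv ℝ h (t, y) ((0:ℝ), EuclideanSpace.single a (1:ℝ)) = _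
  rw [hsplit, map_add, map_smul, tangential_deriv_zero hh hbd ht hy hu, add_zero,
    smul_eq_mul]

lemma gInv_eq_BBt {n : ℕ} {x : ℝ × Esp n → Fin n → ℝ} {p : ℝ × Esp n} :
    gInv x p = (Jac x p)⁻¹ * ((Jac x p)⁻¹)ᵀ := by
  unfold gInv gMat
  rw [Matrix.mul_inv_rev, Matrix.transpose_nonsing_inv]

lemma q_eq_sum_sq {n : ℕ} {x : ℝ × Esp n → Fin n → ℝ} {t : ℝ} {y : Esp n} :
    (∑ c, ∑ d, gInv x (t, y) c d * y c * y d)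
      = ∑ k, ((((Jac x (t,y))⁻¹)ᵀ).mulVec (fun c => y c) k)^2 := by
  set B := (Jac x (t,y))⁻¹ with hBdef
  have hg : ∀ c d, gInv x (t, y) c d = ∑ k, B c k * B d k := by
    intro c d
    rw [gInv_eq_BBt, Matrix.mul_apply]
    exact Finset.sum_congr rfl fun k _ => by rw [Matrix.transpose_apply]
  have hmv : ∀ k, (Bᵀ.mulVec (fun c => y c)) k = ∑ c, B c k * y c := by
    intro k
    simp [Matrix.mulVec, dotProduct, Matrix.transpose_apply]
  calc ∑ c, ∑ d, gInv x (t, y) c d * y c * y d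
      = ∑ c, ∑ d, ∑ k, (B c k * y c) * (B d k * y d) := by
        refine Finset.sum_congr rfl fun c _ => Finset.sum_congr rfl fun d _ => ?_
        rw [hg, Finset.sum_mul, Finset.sum_mul]
        exact Finset.sum_congr rfl fun k _ => by ring
    _ = ∑ c, ∑ k, ∑ d, (B c k * y c) * (B d k * y d) :=
        Finset.sum_congr rfl fun c _ => Finset.sum_comm
    _ = ∑ k, ∑ c, ∑ d, (B c k * y c) * (B d k * y d) := Finset.sum_comm
    _ = ∑ k, (∑ c, B c k * y c) * (∑ d, B d k * y d) := by
        exact Finset.sum_congr rfl fun k _ => (Finset.sum_mul_sum _ _ _ _).symm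
    _ = ∑ k, ((Bᵀ.mulVec (fun c => y c)) k)^2 := by
        refine Finset.sum_congr rfl fun k _ => ?_
        rw [hmv, sq]

lemma nablaN_formula {n : ℕ} {T : ℝ} (hT : 0 < T) {x : ℝ × Esp n → Fin n → ℝ}
    {h : ℝ × Esp n → ℝ} (hh : Smooth h)
    (hbd : ∀ t ∈ Icc (0:ℝ) T, ∀ y ∈ Bdry n, h (t, y) = 0)
    {t : ℝ} (ht : t ∈ Icc (0:ℝ) T) {y : Esp n} (hy : y ∈ Bdry n) :
    nablaN x h (t, y) = fderiv ℝ h (t, y) (0, y) *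
      Real.sqrt (∑ k, ((((Jac x (t,y))⁻¹)ᵀ).mulVec (fun c => y c) k)^2) := by
  unfold nablaN
  have hnum : (∑ a, (∑ b, gInv x (t,y) a b * (t,y).2 b) * Dy a h (t,y))
      = fderiv ℝ h (t, y) (0, y) * (∑ c, ∑ d, gInv x (t,y) c d * y c * y d) := by
    rw [Finset.mul_sum]
    refine Finset.sum_congr rfl fun a _ => ?_
    rw [Dy_radial hh hbd ht hy a, Finset.sum_mul, Finset.mul_sum]
    exact Finset.sum_congr rfl fun b _ => by ring
  rw [hnum, q_eq_sum_sq, mul_div_assoc, Real.div_sqrt]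

lemma q_pos {n : ℕ} {x : ℝ × Esp n → Fin n → ℝ} {t : ℝ} {y : Esp n}
    (hy : y ∈ Bdry n) (hdet : (Jac x (t, y)).det ≠ 0) :
    0 < ∑ k, ((((Jac x (t,y))⁻¹)ᵀ).mulVec (fun c => y c) k)^2 := by
  set A := Jac x (t, y) with hAdef
  set w : Fin n → ℝ := (A⁻¹ᵀ).mulVec (fun c => y c) with hwdef
  have hnn : 0 ≤ ∑ k, (w k)^2 := Finset.sum_nonneg fun _ _ => sq_nonneg _
  rcases hnn.lt_or_eq with hlt | heq
  · exact hlt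
  · exfalso
    have hw0 : w = 0 := by
      funext k
      have := (Finset.sum_eq_zero_iff_of_nonneg (fun k _ => sq_nonneg (w k))).mp heq.symm
        k (Finset.mem_univ k)
      exact pow_eq_zero_iff (by norm_num) |>.mp this
    have hrec : Aᵀ.mulVec w = fun c => y c := by
      rw [hwdef, Matrix.mulVec_mulVec, Matrix.transpose_nonsing_inv,
        Matrix.mul_nonsing_inv _ (by rwa [isUnit_iff_ne_zero, Matrix.det_transpose]),
        Matrix.one_mulVec]
    have hy0 : (fun c => y c) = fun _ => (0:ℝ) := by
      rw [← hrec, hw0]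
      funext c
      simp [Matrix.mulVec_zero]
    have h1 : vn (fun c => y c) = 1 := vn_eq_one hy
    rw [hy0] at h1
    unfold vn at h1
    simp at h1

lemma fderiv_dir_decomp {n : ℕ} (h : ℝ × Esp n → ℝ) (p : ℝ × Esp n) (y : Esp n) :
    fderiv ℝ h p ((0:ℝ), y) = ∑ a, y a * Dy a h p := by
  have h1 : y = ∑ a, y a • EuclideanSpace.single a (1:ℝ) := by
    have := (EuclideanSpace.basisFun (Fin n) ℝ).sum_repr y
    simp only [EuclideanSpace.basisFun_repr, EuclideanSpace.basisFun_apply] at this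
    exact this.symm
  have hyd : ((0:ℝ), y) = ∑ a, y a • (((0:ℝ), EuclideanSpace.single a (1:ℝ)) : ℝ × Esp n) := by
    refine Prod.ext_iff.mpr ⟨?_, ?_⟩
    · rw [Prod.fst_sum]; simp
    · rw [Prod.snd_sum]
      simpa using h1
  rw [hyd, map_sum]
  exact Finset.sum_congr rfl fun a _ => by rw [map_smul, smul_eq_mul]; rfl

lemma abs_coord_le_one {n : ℕ} {y : Esp n} (hy : y ∈ Bdry n) (a : Fin n) : |y a| ≤ 1 := by
  have h1 : vn (fun c => y c) = 1 := vn_eq_one hy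
  have h2 : ∑ c, (y c)^2 = 1 := by
    have := Real.sq_sqrt (Finset.sum_nonneg fun c (_ : c ∈ Finset.univ) => sq_nonneg (y c))
    rw [show Real.sqrt (∑ c, (y c)^2) = 1 from h1] at this
    simpa using this.symm
  have h3 : (y a)^2 ≤ 1 := by
    rw [← h2]
    exact Finset.single_le_sum (f := fun c => (y c)^2) (fun _ _ => sq_nonneg _)
      (Finset.mem_univ a)
  calc |y a| = Real.sqrt ((y a)^2) := (Real.sqrt_sq_eq_abs _).symm
    _ ≤ Real.sqrt 1 := Real.sqrt_le_sqrt h3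
    _ = 1 := Real.sqrt_one

lemma phi_diff_le {n : ℕ} {T : ℝ} {h : ℝ × Esp n → ℝ} (hh : Smooth h)
    {t : ℝ} (ht : t ∈ Icc (0:ℝ) T) {y : Esp n} (hy : y ∈ Bdry n) :
    |fderiv ℝ h (t, y) (0, y) - fderiv ℝ h (0, y) (0, y)| ≤ t * supNorm T 2 h := by
  have hyΩ : y ∈ Omega n := sphere_subset_closedBall hy
  have hC : ∀ τ ∈ Icc (0:ℝ) t, ∑ a, |y a * Dt (Dy a h) (τ, y)| ≤ supNorm T 2 h := by
    intro τ hτ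
    have hmem : ((τ, y) : ℝ × Esp n) ∈ STc n T := ⟨⟨hτ.1, le_trans hτ.2 ht.2⟩, hyΩ⟩
    calc ∑ a, |y a * Dt (Dy a h) (τ, y)|
        ≤ ∑ a, |Dt (Dy a h) (τ, y)| := by
          refine Finset.sum_le_sum fun a _ => ?_
          rw [abs_mul]
          exact mul_le_of_le_one_left (abs_nonneg _) (abs_coord_le_one hy a)
      _ ≤ derivSum 2 h (τ, y) := sum_DtDy_le_derivSum _ _
      _ ≤ supNorm T 2 h := derivSum_le_supNorm T 2 hh hmem
  have key := sum_abs_sub_le_of_deriv (ι := Fin n) Finset.univ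
      (fun a s => y a * Dy a h (s, y))
      (fun a s => y a * Dt (Dy a h) (s, y))
      (fun a _ s => (hasDerivAt_timeSlice (smooth_Dv _ hh) y s).const_mul (y a))
      (fun a _ => continuous_const.mul
        ((smooth_Dv _ (smooth_Dv _ hh)).continuous.comp
          (continuous_id.prodMk continuous_const)))
      ht.1 hC
  rw [fderiv_dir_decomp, fderiv_dir_decomp, ← Finset.sum_sub_distrib]
  exact le_trans (Finset.abs_sum_le_sum_abs _ _) key

lemma inv_abs_nablaN_le_Nenth {n : ℕ} {T : ℝ} (hT : 0 < T)
    {x : ℝ × Esp n → Fin n → ℝ} (hx : SmoothV x)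
    (hjac : ∀ p ∈ STc n T, (Jac x p).det ≠ 0) {h : ℝ × Esp n → ℝ} (hh : Smooth h)
    (hne0 : ∀ y ∈ Bdry n, nablaN x h (0, y) ≠ 0)
    {y : Esp n} (hy : y ∈ Bdry n) :
    |nablaN x h (0, y)|⁻¹ ≤ Nenth x h 0 := by
  refine le_csSup ?_ ⟨y, hy, rfl⟩
  refine (isCompact_sphere 0 1).bddAbove_image ?_
  intro z hz
  apply ContinuousAt.continuousWithinAt
  have hzΩ : z ∈ Omega n := sphere_subset_closedBall hz
  have hdet : (Jac x (0, z)).det ≠ 0 := hjac _ ⟨⟨le_rfl, hT.le⟩, hzΩ⟩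
  have hgc : Continuous fun z : Esp n => gMat x (0, z) := by
    have hJc : Continuous fun z : Esp n => Jac x (0, z) :=
      (cont_Jac hx).comp (continuous_const.prodMk continuous_id)
    exact (hJc.matrix_transpose).matrix_mul hJc
  have hgdet : (gMat x (0, z)).det ≠ 0 := by
    unfold gMat
    rw [Matrix.det_mul, Matrix.det_transpose]
    exact mul_ne_zero hdet hdet
  have hgInvAt : ∀ a b, ContinuousAt (fun z : Esp n => gInv x (0, z) a b) z :=
    fun a b => contAt_inv_entry hgc hgdet a b
  have hcoord : ∀ b : Fin n, Continuous fun z : Esp n => z b :=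
    fun b => PiLp.continuous_apply (p := 2) (β := fun _ => ℝ) b
  have hDyc : ∀ a : Fin n, Continuous fun z : Esp n => Dy a h (0, z) :=
    fun a => (smooth_Dv _ hh).continuous.comp (continuous_const.prodMk continuous_id)
  have hnumAt : ContinuousAt
      (fun z : Esp n => ∑ a, (∑ b, gInv x (0,z) a b * z b) * Dy a h (0,z)) z := by
    refine tendsto_finset_sum _ fun a _ => ?_
    exact (tendsto_finset_sum _ fun b _ =>
      ((hgInvAt a b).mul ((hcoord b).continuousAt))).mul ((hDyc a).continuousAt)
  have hqAt : ContinuousAt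
      (fun z : Esp n => ∑ c, ∑ d, gInv x (0,z) c d * z c * z d) z := by
    refine tendsto_finset_sum _ fun c _ => tendsto_finset_sum _ fun d _ => ?_
    exact ((hgInvAt c d).mul ((hcoord c).continuousAt)).mul ((hcoord d).continuousAt)
  have hqpos : 0 < ∑ c, ∑ d, gInv x (0,z) c d * z c * z d := by
    rw [q_eq_sum_sq]
    exact q_pos hz hdet
  have hsq : ContinuousAt
      (fun z : Esp n => Real.sqrt (∑ c, ∑ d, gInv x (0,z) c d * z c * z d)) z :=
    Real.continuous_sqrt.continuousAt.comp hqAt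
  have hsqne : Real.sqrt (∑ c, ∑ d, gInv x (0,z) c d * z c * z d) ≠ 0 :=
    ne_of_gt (Real.sqrt_pos.mpr hqpos)
  have hnablaAt : ContinuousAt (fun z : Esp n => nablaN x h (0, z)) z := by
    unfold nablaN
    exact hnumAt.div hsq hsqne
  exact (hnablaAt.abs).inv₀ (abs_ne_zero.mpr (hne0 z hz))

private lemma arith_ratio {st s0 : ℝ} (h : |st - s0| ≤ (1/8) * st) :
    (8/9) * s0 ≤ st ∧ st ≤ (8/7) * s0 := by
  obtain ⟨h1, h2⟩ := abs_le.mp h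
  constructor <;> linarith

private lemma arith_final_b {apt ap0 st s0 TH M N aG0 : ℝ}
    (h1 : ap0 - apt ≤ TH) (h2 : (8/9) * s0 ≤ st) (hs0 : 0 ≤ s0) (hst : 0 ≤ st)
    (h5 : s0 ≤ M) (h6 : 0 ≤ TH) (h7 : TH * M * N ≤ 1/8) (h8 : aG0 = ap0 * s0)
    (h9 : 0 < aG0) (h10 : aG0⁻¹ ≤ N) (hap0 : 0 ≤ ap0) (hapt : 0 ≤ apt)
    (hN : 0 < N) :
    (apt * st)⁻¹ ≤ 2 * N := by
  have hN8 : TH * M ≤ aG0 / 8 := by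
    have ha : 1 ≤ N * aG0 := by
      have := mul_le_mul_of_nonneg_right h10 h9.le
      rwa [inv_mul_cancel₀ (ne_of_gt h9)] at this
    nlinarith
  have hTHs0 : TH * s0 ≤ TH * M := mul_le_mul_of_nonneg_left h5 h6
  have hkey : (7/9) * aG0 ≤ apt * st := by
    by_cases hc : TH ≤ ap0
    · nlinarith [mul_nonneg (show (0:ℝ) ≤ apt - ap0 + TH by linarith) hst,
        mul_nonneg (show (0:ℝ) ≤ ap0 - TH by linarith)
          (show (0:ℝ) ≤ st - (8/9)*s0 by linarith)]
    · exfalso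
      push_neg at hc
      nlinarith [mul_nonneg (show (0:ℝ) ≤ TH - ap0 by linarith) hs0]
  have hGtpos : 0 < apt * st := lt_of_lt_of_le (by nlinarith) hkey
  have hhalf : aG0 / 2 ≤ apt * st := by nlinarith
  calc (apt * st)⁻¹ ≤ (aG0/2)⁻¹ := inv_anti₀ (by nlinarith) hhalf
    _ = 2 * aG0⁻¹ := by rw [div_eq_mul_inv, mul_inv, inv_inv]; ring
    _ ≤ 2 * N := by linarith

set_option maxHeartbeats 2000000 in
lemma best {n : ℕ} (hn : 0 < n) {T : ℝ} (hT : 0 < T)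
    {x : ℝ × Esp n → Fin n → ℝ} (hx : SmoothV x)
    (hjac : ∀ p ∈ STc n T, (Jac x p).det ≠ 0)
    {h : ℝ × Esp n → ℝ} (hh : Smooth h)
    (hbd : ∀ t ∈ Icc (0:ℝ) T, ∀ y ∈ Bdry n, h (t, y) = 0)
    (hne : ∀ t ∈ Icc (0:ℝ) T, ∀ y ∈ Bdry n, nablaN x h (t, y) ≠ 0)
    (hsA : T * supNormV T 2 x * Mjac x 0 ≤ 1 / 8)
    (hsB : T * supNorm T 2 h * Mjac x 0 * Nenth x h 0 ≤ 1 / 8)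
    {t : ℝ} (ht : t ∈ Icc (0:ℝ) T) {y : Esp n} (hy : y ∈ Bdry n) :
    |nablaN x h (t, y)|⁻¹ ≤ 2 * Nenth x h 0 := by
  have hyΩ : y ∈ Omega n := sphere_subset_closedBall hy
  have h0T : (0:ℝ) ∈ Icc (0:ℝ) T := ⟨le_rfl, hT.le⟩
  obtain ⟨hc1, _, hb0M, hM0pos, _⟩ := main_est hn hT hx hjac hsA ht hyΩ
  have hdet0 : (Jac x (0, y)).det ≠ 0 := hjac _ ⟨h0T, hyΩ⟩
  have hdett : (Jac x (t, y)).det ≠ 0 := hjac _ ⟨ht, hyΩ⟩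
  set A0 := Jac x (0, y) with hA0def
  set At := Jac x (t, y) with hAtdef
  set w0 : Fin n → ℝ := (A0⁻¹ᵀ).mulVec (fun c => y c) with hw0
  set wt : Fin n → ℝ := (At⁻¹ᵀ).mulVec (fun c => y c) with hwt
  have hident : At⁻¹ - A0⁻¹ = At⁻¹ * (A0 - At) * A0⁻¹ := inv_sub_inv' hdet0 hdett
  have hdiffv : wt - w0 = (A0⁻¹ᵀ).mulVec (((A0 - At)ᵀ).mulVec wt) := by
    rw [hwt, hw0, ← Matrix.sub_mulVec, ← Matrix.transpose_sub, hident,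
      Matrix.transpose_mul, Matrix.transpose_mul, Matrix.mulVec_mulVec,
      ← Matrix.mul_assoc, Matrix.mulVec_mulVec]
  have hdiff : vn (wt - w0) ≤ (fn A0⁻¹ * fn (A0 - At)) * vn wt := by
    rw [hdiffv]
    calc vn ((A0⁻¹ᵀ).mulVec (((A0 - At)ᵀ).mulVec wt))
        ≤ fn (A0⁻¹ᵀ) * vn (((A0 - At)ᵀ).mulVec wt) := vn_mulVec _ _
      _ ≤ fn (A0⁻¹ᵀ) * (fn ((A0 - At)ᵀ) * vn wt) :=
          mul_le_mul_of_nonneg_left (vn_mulVec _ _) (fn_nonneg _)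
      _ = (fn A0⁻¹ * fn (A0 - At)) * vn wt := by
          rw [fn_transpose, fn_transpose]; ring
  have h18 : fn A0⁻¹ * fn (A0 - At) ≤ 1/8 := by
    have := mul_le_mul_of_nonneg_right hb0M (fn_nonneg (A0 - At))
    linarith [hc1, mul_comm (Mjac x 0) (fn (A0 - At))]
  have hdiff2 : |vn wt - vn w0| ≤ (1/8) * vn wt := by
    refine le_trans (abs_vn_sub_vn wt w0) (le_trans hdiff ?_)
    exact mul_le_mul_of_nonneg_right h18 (vn_nonneg _)
  obtain ⟨hst_ge, _⟩ := arith_ratio hdiff2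
  have hs0M : vn w0 ≤ Mjac x 0 := by
    calc vn w0 ≤ fn (A0⁻¹ᵀ) * vn (fun c => y c) := vn_mulVec _ _
      _ = fn A0⁻¹ * 1 := by rw [fn_transpose, vn_eq_one hy]
      _ ≤ Mjac x 0 := by rw [mul_one]; exact hb0M
  have hGt : nablaN x h (t,y) = fderiv ℝ h (t,y) (0,y) * vn wt := by
    rw [nablaN_formula hT hh hbd ht hy]; rfl
  have hG0 : nablaN x h (0,y) = fderiv ℝ h (0,y) (0,y) * vn w0 := by
    rw [nablaN_formula hT hh hbd h0T hy]; rfl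
  have hφ : |fderiv ℝ h (t,y) (0,y) - fderiv ℝ h (0,y) (0,y)| ≤ T * supNorm T 2 h :=
    le_trans (phi_diff_le hh ht hy)
      (mul_le_mul_of_nonneg_right ht.2 (supNorm_nonneg hT.le 2 hh))
  have hG0ne : nablaN x h (0, y) ≠ 0 := hne 0 h0T y hy
  have hNle : |nablaN x h (0, y)|⁻¹ ≤ Nenth x h 0 :=
    inv_abs_nablaN_le_Nenth hT hx hjac hh (hne 0 h0T) hy
  have hN0pos : 0 < Nenth x h 0 :=
    lt_of_lt_of_le (inv_pos.mpr (abs_pos.mpr hG0ne)) hNle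
  have hTH : 0 ≤ T * supNorm T 2 h := mul_nonneg hT.le (supNorm_nonneg hT.le 2 hh)
  have habs0 : |nablaN x h (0, y)| = |fderiv ℝ h (0,y) (0,y)| * vn w0 := by
    rw [hG0, abs_mul, abs_of_nonneg (vn_nonneg _)]
  have habst : |nablaN x h (t, y)| = |fderiv ℝ h (t,y) (0,y)| * vn wt := by
    rw [hGt, abs_mul, abs_of_nonneg (vn_nonneg _)]
  rw [habst]
  refine arith_final_b ?_ hst_ge (vn_nonneg _) (vn_nonneg _) hs0M hTH hsB habs0
    (abs_pos.mpr hG0ne) hNle (abs_nonneg _) (abs_nonneg _)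
    hN0pos
  calc |fderiv ℝ h (0,y) (0,y)| - |fderiv ℝ h (t,y) (0,y)|
      ≤ |fderiv ℝ h (0,y) (0,y) - fderiv ℝ h (t,y) (0,y)| := abs_sub_abs_le_abs_sub _ _
    _ = |fderiv ℝ h (t,y) (0,y) - fderiv ℝ h (0,y) (0,y)| := abs_sub_comm _ _
    _ ≤ T * supNorm T 2 h := hφ

lemma Mjac_zero_of_n0 (x : ℝ × Esp 0 → Fin 0 → ℝ) (s : ℝ) : Mjac x s = 0 := by
  unfold Mjac
  have h1 : (fun y : Esp 0 => Real.sqrt ((∑ i, ∑ a, Jac x (s, y) i a ^ 2)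
      + ∑ a, ∑ i, ((Jac x (s, y))⁻¹ a i)^2)) = fun _ => (0:ℝ) := by
    funext y; simp
  rw [h1, Set.Nonempty.image_const ⟨0, zero_mem_Omega 0⟩ 0, csSup_singleton]

theorem lemma11_1 (n : ℕ) (T : ℝ) (hT : 0 < T)
    (x : ℝ × Esp n → Fin n → ℝ) (hx : SmoothV x)
    (hjac : ∀ p ∈ STc n T, (Jac x p).det ≠ 0) :
    (T * supNormV T 2 x * Mjac x 0 ≤ 1 / 8 →
      ∀ t ∈ Set.Icc (0 : ℝ) T, Mjac x t ≤ 2 * Mjac x 0) ∧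
    (∀ h : ℝ × Esp n → ℝ, Smooth h →
      (∀ t ∈ Set.Icc (0 : ℝ) T, ∀ y ∈ Bdry n, h (t, y) = 0) →
      (∀ t ∈ Set.Icc (0 : ℝ) T, ∀ y ∈ Bdry n, nablaN x h (t, y) ≠ 0) →
      T * supNormV T 2 x * Mjac x 0 ≤ 1 / 8 →
      T * supNorm T 2 h * Mjac x 0 * Nenth x h 0 ≤ 1 / 8 →
      ∀ t ∈ Set.Icc (0 : ℝ) T, Nenth x h t ≤ 2 * Nenth x h 0) := by
  constructor
  · intro hsmall t ht
    rcases Nat.eq_zero_or_pos n with hn0 | hn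
    · subst hn0
      rw [Mjac_zero_of_n0 x t, Mjac_zero_of_n0 x 0]
      norm_num
    · refine csSup_le ⟨_, ⟨0, zero_mem_Omega n, rfl⟩⟩ ?_
      rintro v ⟨y, hy, rfl⟩
      exact (main_est hn hT hx hjac hsmall ht hy).2.2.2.2
  · intro h hh hbd hne hsA hsB t ht
    rcases Nat.eq_zero_or_pos n with hn0 | hn
    · subst hn0
      have hBdry : Bdry 0 = (∅ : Set (Esp 0)) := by
        ext z
        simp only [Bdry, mem_sphere_iff_norm, Set.mem_empty_iff_false, iff_false]
        have hz : z = 0 := by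
          ext a
          exact absurd a.2 (by simp)
        rw [hz]
        simp
      have hN : ∀ s : ℝ, Nenth x h s = 0 := by
        intro s
        unfold Nenth
        rw [hBdry, Set.image_empty, Real.sSup_empty]
      rw [hN t, hN 0]
      norm_num
    · refine csSup_le ?_ ?_
      · have y0mem : EuclideanSpace.single (⟨0, hn⟩ : Fin n) (1:ℝ) ∈ Bdry n :=
          mem_sphere_zero_iff_norm.mpr (by rw [EuclideanSpace.norm_single]; norm_num)
        exact ⟨_, ⟨_, y0mem, rfl⟩⟩
      · rintro v ⟨y, hy, rfl⟩
        exact best hn hT hx hjac hh hbd hne hsA hsB ht hy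
end FB
end
end
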